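/- arXiv:1508.06269 — 3 statements merged into one kernel-verified Lean document; each statement's English description precedes it below -/
import Mathlib

section
/- (Belief factorization and recursive update.) For any common-agent strategy profile, the common-information belief π_t(x_t) := P(X_t = x_t | a_{1:t-1}) factorizes as a product of marginals π_t(x_t) = ∏_{i=1}^N π_t^i(x_t^i), and each marginal updates via a strategy-independent Bayes map: π_{t+1}^i(x_{t+1}^i) = [Σ_{x_t^i} π_t^i(x_t^i) γ_t^i(a_t^i | x_t^i) Q_t^i(x_{t+1}^i | x_t^i, a_t)] / [Σ_{x̃_t^i} π_t^i(x̃_t^i) γ_t^i(a_t^i | x̃_t^i)] whenever the denominator is positive, and π_{t+1}^i(x_{t+1}^i) = Σ_{x_t^i} π_t^i(x_t^i) Q_t^i(x_{t+1}^i | x_t^i, a_t) otherwise, where γ_t^i(· | ·) is the prescription (stochastic map X^i → P(A^i)) used by player i at time t. -/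
open scoped Classical BigOperators

noncomputable section

namespace DynGame

variable (N T : ℕ) (X A : Fin N → Type)
  [∀ i, Fintype (X i)] [∀ i, Fintype (A i)]

/-- A (behavioral) strategy profile: player `i` at time `t` sees the public action
history and its own private type history and randomizes over its actions. -/
abbrev Strat := ∀ i : Fin N, Fin T → (Fin T → ∀ j, A j) → (Fin T → X i) → A i → ℝ

/-- Probability of a full trajectory `(x_{1:T}, a_{1:T})` under the prior `Q1`,
the conditionally independent controlled Markov kernels `Qk` and the profile `g`. -/
def trajP (Q1 : ∀ i, X i → ℝ)
    (Qk : ∀ i, Fin T → X i → (∀ j, A j) → X i → ℝ)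
    (g : Strat N T X A)
    (x : Fin T → ∀ i, X i) (a : Fin T → ∀ i, A i) : ℝ :=
  (if h : 0 < T then ∏ i, Q1 i (x ⟨0, h⟩ i) else 1) *
  ∏ t : Fin T,
    ((∏ i, g i t a (fun s => x s i) (a t i)) *
     ∏ i, (if h : (t : ℕ) + 1 < T then
              Qk i ⟨(t : ℕ) + 1, h⟩ (x t i) (a t) (x ⟨(t : ℕ) + 1, h⟩ i) else 1))

/-- Causality: the strategy depends only on the strict past of public actions and the
past (including present) of the player's own types. -/
def Causal (g : Strat N T X A) : Prop :=
  ∀ i (t : Fin T) a a' xi xi',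
    (∀ s : Fin T, (s : ℕ) < (t : ℕ) → a s = a' s) →
    (∀ s : Fin T, (s : ℕ) ≤ (t : ℕ) → xi s = xi' s) →
    g i t a xi = g i t a' xi'

/-- The strategy profile is made of probability distributions. -/
def Stochastic (g : Strat N T X A) : Prop :=
  ∀ i t a xi, (∀ b, 0 ≤ g i t a xi b) ∧ (∑ b, g i t a xi b) = 1

def StochKer (Q1 : ∀ i, X i → ℝ) (Qk : ∀ i, Fin T → X i → (∀ j, A j) → X i → ℝ) : Prop :=
  (∀ i, (∀ x, 0 ≤ Q1 i x) ∧ (∑ x, Q1 i x) = 1) ∧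
  (∀ i t x a, (∀ x', 0 ≤ Qk i t x a x') ∧ (∑ x', Qk i t x a x') = 1)

variable (Q1 : ∀ i, X i → ℝ) (Qk : ∀ i, Fin T → X i → (∀ j, A j) → X i → ℝ)

/-- Marginal probability of the public action history `a_{1:t-1}`
(indices `s` with `s+1 ≤ t-1 <-> s+1 < t` in 0-based time). -/
def aMarg (g : Strat N T X A) (t : ℕ) (a : Fin T → ∀ i, A i) : ℝ :=
  ∑ x' : Fin T → ∀ i, X i, ∑ a' : Fin T → ∀ i, A i,
    if (∀ s : Fin T, (s : ℕ) + 1 < t → a' s = a s) then trajP N T X A Q1 Qk g x' a' else 0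

/-- Joint probability of `(x_{1:t}, a_{1:t-1})`. -/
def xaMarg (g : Strat N T X A) (t : ℕ) (x : Fin T → ∀ i, X i) (a : Fin T → ∀ i, A i) : ℝ :=
  ∑ x' : Fin T → ∀ i, X i, ∑ a' : Fin T → ∀ i, A i,
    if (∀ s : Fin T, (s : ℕ) + 1 < t → a' s = a s) ∧ (∀ s : Fin T, (s : ℕ) < t → x' s = x s)
    then trajP N T X A Q1 Qk g x' a' else 0

/-- Joint conditional `P^g(x_{1:t} | a_{1:t-1})`. -/
def condJoint (g : Strat N T X A) (t : ℕ) (x : Fin T → ∀ i, X i) (a : Fin T → ∀ i, A i) : ℝ :=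
  xaMarg N T X A Q1 Qk g t x a / aMarg N T X A Q1 Qk g t a

/-- Probability of `(x_{1:t}^i, a_{1:t-1})` for a single player `i`. -/
def xiMarg (g : Strat N T X A) (i : Fin N) (t : ℕ) (xi : Fin T → X i)
    (a : Fin T → ∀ i, A i) : ℝ :=
  ∑ x' : Fin T → ∀ i, X i, ∑ a' : Fin T → ∀ i, A i,
    if (∀ s : Fin T, (s : ℕ) + 1 < t → a' s = a s) ∧ (∀ s : Fin T, (s : ℕ) < t → x' s i = xi s)
    then trajP N T X A Q1 Qk g x' a' else 0

/-- Player-`i` marginal conditional `P^g(x_{1:t}^i | a_{1:t-1})`. -/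
def condI (g : Strat N T X A) (i : Fin N) (t : ℕ) (xi : Fin T → X i)
    (a : Fin T → ∀ i, A i) : ℝ :=
  xiMarg N T X A Q1 Qk g i t xi a / aMarg N T X A Q1 Qk g t a


/-- A common-agent policy: for each player, a map from the public action history to a
prescription (a stochastic map from the player's current type to its actions). -/
abbrev CAPolicy := ∀ i : Fin N, Fin T → (Fin T → ∀ j, A j) → X i → A i → ℝ

/-- The history-based strategy profile induced by a common-agent policy. -/
def caStrat (ψ : CAPolicy N T X A) : Strat N T X A :=
  fun i t a xi ai => ψ i t a (xi t) ai

/-- Causality of a common-agent policy in the public history. -/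
def CACausal (ψ : CAPolicy N T X A) : Prop :=
  ∀ i (t : Fin T) a a' xv,
    (∀ s : Fin T, (s : ℕ) < (t : ℕ) → a s = a' s) → ψ i t a xv = ψ i t a' xv

def CAStochastic (ψ : CAPolicy N T X A) : Prop :=
  ∀ i t a xv, (∀ b, 0 ≤ ψ i t a xv b) ∧ (∑ b, ψ i t a xv b) = 1

/-- The marginal belief `π_t^i(x) = P^ψ(x_t^i = x | a_{1:t-1})`; `τ` is 0-based. -/
def bel (ψ : CAPolicy N T X A) (i : Fin N) (τ : Fin T)
    (a : Fin T → ∀ j, A j) (xiv : X i) : ℝ :=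
  (∑ x' : Fin T → ∀ j, X j, ∑ a' : Fin T → ∀ j, A j,
    if (∀ s : Fin T, (s : ℕ) < (τ : ℕ) → a' s = a s) ∧ x' τ i = xiv
    then trajP N T X A Q1 Qk (caStrat N T X A ψ) x' a' else 0) /
  aMarg N T X A Q1 Qk (caStrat N T X A ψ) ((τ : ℕ) + 1) a

/-- The joint belief `π_t(x) = P^ψ(x_t = x | a_{1:t-1})`. -/
def belJoint (ψ : CAPolicy N T X A) (τ : Fin T)
    (a : Fin T → ∀ j, A j) (xv : ∀ j, X j) : ℝ :=
  (∑ x' : Fin T → ∀ j, X j, ∑ a' : Fin T → ∀ j, A j,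
    if (∀ s : Fin T, (s : ℕ) < (τ : ℕ) → a' s = a s) ∧ x' τ = xv
    then trajP N T X A Q1 Qk (caStrat N T X A ψ) x' a' else 0) /
  aMarg N T X A Q1 Qk (caStrat N T X A ψ) ((τ : ℕ) + 1) a

/-- The strategy-independent one-player Bayes update map `F̄`: `Qt` is the transition
kernel (with the realized joint action already plugged in), `πi` the current marginal,
`γrow x` the probability that type `x` produces the realized own action. -/
def Fbar {X' : Type} [Fintype X'] (Qt : X' → X' → ℝ) (πi : X' → ℝ) (γrow : X' → ℝ) :
    X' → ℝ :=
  fun x' =>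
    if 0 < ∑ x, πi x * γrow x then
      (∑ x, πi x * γrow x * Qt x x') / (∑ x, πi x * γrow x)
    else ∑ x, πi x * Qt x x'

/-! ### Auxiliary machinery for the proof -/
set_option linter.unusedSectionVars false

/-- Sum over a pi type of a product factorizes. -/
lemma sum_pi_prod {ι : Type*} [Fintype ι] [DecidableEq ι] {Y : ι → Type*}
    [∀ i, Fintype (Y i)] (F : ∀ i, Y i → ℝ) :
    ∑ f : ∀ i, Y i, ∏ i, F i (f i) = ∏ i, ∑ y, F i y := by
  rw [Finset.prod_univ_sum, Fintype.piFinset_univ]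

/-- Transport a pinned coordinate of a function-space sum. -/
lemma repin {α β : Type*} [Fintype α] [DecidableEq α] [Fintype β]
    (F : (α → β) → ℝ) (m : α) (c₁ c₂ : β)
    (hF : ∀ f b, F (Function.update f m b) = F f) :
    (∑ f : α → β, if f m = c₁ then F f else 0)
      = ∑ f : α → β, if f m = c₂ then F f else 0 := by
  rw [← Finset.sum_filter, ← Finset.sum_filter]
  refine Finset.sum_bij' (fun f _ => Function.update f m c₂)
    (fun f _ => Function.update f m c₁) ?_ ?_ ?_ ?_ ?_
  · intro f hf; simp [Finset.mem_filter]
  · intro f hf; simp [Finset.mem_filter]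
  · intro f hf
    simp only [Finset.mem_filter, Finset.mem_univ, true_and] at hf
    rw [Function.update_idem, ← hf, Function.update_eq_self]
  · intro f hf
    simp only [Finset.mem_filter, Finset.mem_univ, true_and] at hf
    rw [Function.update_idem, ← hf, Function.update_eq_self]
  · intro f hf; exact (hF f c₂).symm

/-- Summing out one coordinate of a function-space sum. -/
lemma sum_out {α β : Type*} [Fintype α] [DecidableEq α] [Fintype β]
    (F G : (α → β) → ℝ) (m : α) (c : β)
    (h : ∀ f : α → β, f m = c → (∑ b : β, F (Function.update f m b)) = G f) :
    ∑ f : α → β, F f = ∑ f : α → β, if f m = c then G f else 0 := by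
  have key : ∀ b : β, (∑ f : α → β, if f m = b then F f else 0)
      = ∑ f : α → β, if f m = c then F (Function.update f m b) else 0 := by
    intro b
    rw [← Finset.sum_filter, ← Finset.sum_filter]
    refine Finset.sum_bij' (fun f _ => Function.update f m c)
      (fun f _ => Function.update f m b) ?_ ?_ ?_ ?_ ?_
    · intro f hf; simp [Finset.mem_filter]
    · intro f hf; simp [Finset.mem_filter]
    · intro f hf
      simp only [Finset.mem_filter, Finset.mem_univ, true_and] at hf
      rw [Function.update_idem, ← hf, Function.update_eq_self]
    · intro f hf
      simp only [Finset.mem_filter, Finset.mem_univ, true_and] at hf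
      rw [Function.update_idem, ← hf, Function.update_eq_self]
    · intro f hf
      simp only [Finset.mem_filter, Finset.mem_univ, true_and] at hf
      rw [Function.update_idem, ← hf, Function.update_eq_self]
  calc ∑ f : α → β, F f
      = ∑ f : α → β, ∑ b : β, if f m = b then F f else 0 := by
        refine Finset.sum_congr rfl fun f _ => ?_
        rw [Finset.sum_ite_eq (Finset.univ) (f m) (fun _ => F f)]
        simp
    _ = ∑ b : β, ∑ f : α → β, if f m = b then F f else 0 := Finset.sum_comm
    _ = ∑ b : β, ∑ f : α → β, if f m = c then F (Function.update f m b) else 0 :=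
        Finset.sum_congr rfl fun b _ => key b
    _ = ∑ f : α → β, ∑ b : β, if f m = c then F (Function.update f m b) else 0 :=
        Finset.sum_comm
    _ = ∑ f : α → β, if f m = c then G f else 0 := by
        refine Finset.sum_congr rfl fun f _ => ?_
        by_cases hf : f m = c
        · simp only [hf, if_true]; exact h f hf
        · simp [hf]

lemma nested_ite {p q r : Prop} {dp : Decidable p} {dq : Decidable q} {dr : Decidable r}
    (h : r ↔ (p ∧ q)) (c : ℝ) :
    (@ite ℝ p dp (@ite ℝ q dq c 0) 0) = @ite ℝ r dr c 0 := by
  split_ifs <;> first | rfl | tauto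

/-- Per-player truncated trajectory weight (public history `a` plugged in). -/
def wP (ψ : CAPolicy N T X A) (a : Fin T → ∀ j, A j) (i : Fin N) (m : ℕ)
    (xi : Fin T → X i) : ℝ :=
  (if h : 0 < T then Q1 i (xi ⟨0, h⟩) else 1) *
  ∏ s : Fin T, if (s : ℕ) < m then
      ψ i s a (xi s) (a s i) *
      (if h : (s : ℕ) + 1 < T then
          Qk i ⟨(s : ℕ) + 1, h⟩ (xi s) (a s) (xi ⟨(s : ℕ) + 1, h⟩) else 1)
    else 1

/-- Marginal weight of `x_t^i = x` with the tail of the trajectory pinned to `xd`. -/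
def Wi (ψ : CAPolicy N T X A) (a : Fin T → ∀ j, A j) (xd : Fin T → ∀ j, X j)
    (i : Fin N) (tf : Fin T) (x : X i) : ℝ :=
  ∑ xi : Fin T → X i,
    if xi tf = x ∧ (∀ s : Fin T, (tf : ℕ) < (s : ℕ) → xi s = xd s i)
    then wP N T X A Q1 Qk ψ a i (tf : ℕ) xi else 0

/-- Truncated joint trajectory weight, with genuine histories `a'`. -/
def Pm (ψ : CAPolicy N T X A) (m : ℕ) (x : Fin T → ∀ j, X j)
    (a' : Fin T → ∀ j, A j) : ℝ :=
  (if h : 0 < T then ∏ i, Q1 i (x ⟨0, h⟩ i) else 1) *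
  ∏ s : Fin T, if (s : ℕ) < m then
      (∏ i, ψ i s a' (x s i) (a' s i)) *
      ∏ i, (if h : (s : ℕ) + 1 < T then
          Qk i ⟨(s : ℕ) + 1, h⟩ (x s i) (a' s) (x ⟨(s : ℕ) + 1, h⟩ i) else 1)
    else 1

/-- Truncated sum with unused coordinates pinned. -/
def Em (ψ : CAPolicy N T X A) (a : Fin T → ∀ j, A j) (xd : Fin T → ∀ j, X j)
    (τ : Fin T) (xv : ∀ j, X j) (m : ℕ) : ℝ :=
  ∑ x' : Fin T → ∀ j, X j, ∑ a' : Fin T → ∀ j, A j,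
    if ((∀ s : Fin T, (s : ℕ) < (τ : ℕ) → a' s = a s)
          ∧ (∀ s : Fin T, m ≤ (s : ℕ) → a' s = a s))
        ∧ (x' τ = xv ∧ (∀ s : Fin T, m < (s : ℕ) → x' s = xd s))
    then Pm N T X A Q1 Qk ψ m x' a' else 0

lemma prod_if_succ {T' : ℕ} (B : Fin T' → ℝ) (m : ℕ) (hm : m < T') :
    (∏ s : Fin T', if (s : ℕ) < m + 1 then B s else 1)
      = (∏ s : Fin T', if (s : ℕ) < m then B s else 1) * B ⟨m, hm⟩ := by
  rw [← Finset.mul_prod_erase Finset.univ (fun s : Fin T' => if (s:ℕ) < m + 1 then B s else 1)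
      (Finset.mem_univ (⟨m, hm⟩ : Fin T')),
      ← Finset.mul_prod_erase Finset.univ (fun s : Fin T' => if (s:ℕ) < m then B s else 1)
      (Finset.mem_univ (⟨m, hm⟩ : Fin T'))]
  have herase : ∀ s ∈ Finset.univ.erase (⟨m, hm⟩ : Fin T'),
      (if (s:ℕ) < m + 1 then B s else 1) = (if (s:ℕ) < m then B s else 1) := by
    intro s hs
    have hne : (s : ℕ) ≠ m := fun h => (Finset.mem_erase.mp hs).1 (Fin.ext h)
    by_cases h' : (s:ℕ) < m
    · rw [if_pos h', if_pos (by omega)]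
    · rw [if_neg h', if_neg (by omega)]
  rw [Finset.prod_congr rfl herase]
  have c1 : ((( ⟨m, hm⟩ : Fin T') : ℕ)) = m := rfl
  rw [if_pos (show ((⟨m, hm⟩ : Fin T') : ℕ) < m + 1 by omega),
      if_neg (show ¬ ((⟨m, hm⟩ : Fin T') : ℕ) < m by omega)]
  ring

lemma Pm_T (ψ : CAPolicy N T X A) (x : Fin T → ∀ j, X j) (a' : Fin T → ∀ j, A j) :
    Pm N T X A Q1 Qk ψ T x a' = trajP N T X A Q1 Qk (caStrat N T X A ψ) x a' := by
  unfold Pm trajP caStrat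
  exact congrArg _ (Finset.prod_congr rfl fun s _ => if_pos s.isLt)

lemma Pm_succ (ψ : CAPolicy N T X A) (m : ℕ) (hm : m < T) (x : Fin T → ∀ j, X j)
    (a' : Fin T → ∀ j, A j) :
    Pm N T X A Q1 Qk ψ (m + 1) x a' = Pm N T X A Q1 Qk ψ m x a' *
      ((∏ i, ψ i ⟨m, hm⟩ a' (x ⟨m, hm⟩ i) (a' ⟨m, hm⟩ i)) *
       ∏ i, (if h : m + 1 < T then
          Qk i ⟨m + 1, h⟩ (x ⟨m, hm⟩ i) (a' ⟨m, hm⟩) (x ⟨m + 1, h⟩ i) else 1)) := by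
  unfold Pm
  rw [prod_if_succ _ m hm]
  ring

lemma wP_succ (ψ : CAPolicy N T X A) (a : Fin T → ∀ j, A j) (i : Fin N) (m : ℕ)
    (hm : m < T) (xi : Fin T → X i) :
    wP N T X A Q1 Qk ψ a i (m + 1) xi = wP N T X A Q1 Qk ψ a i m xi *
      (ψ i ⟨m, hm⟩ a (xi ⟨m, hm⟩) (a ⟨m, hm⟩ i) *
       (if h : m + 1 < T then
          Qk i ⟨m + 1, h⟩ (xi ⟨m, hm⟩) (a ⟨m, hm⟩) (xi ⟨m + 1, h⟩) else 1)) := by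
  unfold wP
  rw [prod_if_succ _ m hm]
  ring

lemma Pm_congr (ψ : CAPolicy N T X A) (hc : CACausal N T X A ψ) (m : ℕ)
    (x xb : Fin T → ∀ j, X j) (a' ab : Fin T → ∀ j, A j)
    (hx : ∀ s : Fin T, (s : ℕ) < m + 1 → x s = xb s)
    (ha : ∀ s : Fin T, (s : ℕ) < m → a' s = ab s) :
    Pm N T X A Q1 Qk ψ m x a' = Pm N T X A Q1 Qk ψ m xb ab := by
  unfold Pm
  refine congrArg₂ (· * ·) ?_ (Finset.prod_congr rfl fun s _ => ?_)
  · by_cases h : 0 < T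
    · simp only [dif_pos h]
      rw [hx ⟨0, h⟩ (Nat.succ_pos m)]
    · simp only [dif_neg h]
  · by_cases hs : (s:ℕ) < m
    · rw [if_pos hs, if_pos hs]
      have hxs : x s = xb s := hx s (by omega)
      have has : a' s = ab s := ha s hs
      refine congrArg₂ (· * ·) ?_ ?_
      · refine Finset.prod_congr rfl fun i _ => ?_
        rw [hxs, has, hc i s a' ab _ (fun u hu => ha u (lt_trans hu hs))]
      · refine Finset.prod_congr rfl fun i _ => ?_
        by_cases h : (s:ℕ) + 1 < T
        · simp only [dif_pos h]
          rw [hxs, has, hx ⟨(s:ℕ)+1, h⟩ (Nat.succ_lt_succ hs)]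
        · simp only [dif_neg h]
    · rw [if_neg hs, if_neg hs]

lemma wP_congr (ψ : CAPolicy N T X A) (a : Fin T → ∀ j, A j) (i : Fin N) (m : ℕ)
    (xi xi' : Fin T → X i) (h : ∀ s : Fin T, (s : ℕ) < m + 1 → xi s = xi' s) :
    wP N T X A Q1 Qk ψ a i m xi = wP N T X A Q1 Qk ψ a i m xi' := by
  unfold wP
  refine congrArg₂ (· * ·) ?_ (Finset.prod_congr rfl fun s _ => ?_)
  · by_cases h0 : 0 < T
    · simp only [dif_pos h0]
      rw [h ⟨0, h0⟩ (Nat.succ_pos m)]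
    · simp only [dif_neg h0]
  · by_cases hs : (s:ℕ) < m
    · rw [if_pos hs, if_pos hs]
      have hxs : xi s = xi' s := h s (by omega)
      refine congrArg₂ (· * ·) ?_ ?_
      · rw [hxs]
      · by_cases h1 : (s:ℕ) + 1 < T
        · simp only [dif_pos h1]
          rw [hxs, h ⟨(s:ℕ)+1, h1⟩ (Nat.succ_lt_succ hs)]
        · simp only [dif_neg h1]
    · rw [if_neg hs, if_neg hs]

lemma Pm_prod (ψ : CAPolicy N T X A) (a : Fin T → ∀ j, A j) (m : ℕ)
    (x : Fin T → ∀ j, X j) :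
    Pm N T X A Q1 Qk ψ m x a = ∏ i, wP N T X A Q1 Qk ψ a i m (fun s => x s i) := by
  unfold Pm wP
  rw [Finset.prod_mul_distrib]
  refine congrArg₂ (· * ·) ?_ ?_
  · by_cases h : 0 < T
    · simp only [dif_pos h]
    · simp only [dif_neg h, Finset.prod_const_one]
  · rw [Finset.prod_comm]
    refine Finset.prod_congr rfl fun s _ => ?_
    by_cases hs : (s:ℕ) < m
    · simp only [if_pos hs]
      rw [Finset.prod_mul_distrib]
    · simp only [if_neg hs, Finset.prod_const_one]

lemma Em_top (ψ : CAPolicy N T X A) (a : Fin T → ∀ j, A j) (xd : Fin T → ∀ j, X j)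
    (τ : Fin T) (xv : ∀ j, X j) :
    Em N T X A Q1 Qk ψ a xd τ xv T
      = ∑ x' : Fin T → ∀ j, X j, ∑ a' : Fin T → ∀ j, A j,
          if (∀ s : Fin T, (s : ℕ) < (τ : ℕ) → a' s = a s) ∧ x' τ = xv
          then trajP N T X A Q1 Qk (caStrat N T X A ψ) x' a' else 0 := by
  unfold Em
  refine Finset.sum_congr rfl fun x' _ => Finset.sum_congr rfl fun a' _ => ?_
  rw [Pm_T]
  refine if_congr ?_ rfl rfl
  constructor
  · rintro ⟨⟨h1, _⟩, h3, _⟩; exact ⟨h1, h3⟩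
  · rintro ⟨h1, h3⟩
    exact ⟨⟨h1, fun s hs => absurd s.isLt (not_lt.2 hs)⟩, h3,
      fun s hs => absurd s.isLt (not_lt.2 (le_of_lt hs))⟩

lemma Em_base (ψ : CAPolicy N T X A) (a : Fin T → ∀ j, A j) (xd : Fin T → ∀ j, X j)
    (τ : Fin T) (xv : ∀ j, X j) :
    Em N T X A Q1 Qk ψ a xd τ xv (τ : ℕ)
      = ∑ x' : Fin T → ∀ j, X j,
          if x' τ = xv ∧ (∀ s : Fin T, (τ : ℕ) < (s : ℕ) → x' s = xd s)
          then Pm N T X A Q1 Qk ψ (τ : ℕ) x' a else 0 := by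
  unfold Em
  refine Finset.sum_congr rfl fun x' _ => ?_
  rw [Finset.sum_eq_single a]
  · refine if_congr ?_ rfl rfl
    constructor
    · rintro ⟨_, h⟩; exact h
    · intro h; exact ⟨⟨fun s _ => rfl, fun s _ => rfl⟩, h⟩
  · intro b _ hb
    rw [if_neg]
    rintro ⟨⟨h1, h2⟩, _⟩
    exact hb (funext fun s => (lt_or_ge ((s:ℕ)) ((τ:ℕ))).elim (h1 s) (h2 s))
  · intro h; exact absurd (Finset.mem_univ a) h

lemma Em_base_prod (ψ : CAPolicy N T X A) (a : Fin T → ∀ j, A j) (xd : Fin T → ∀ j, X j)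
    (τ : Fin T) (xv : ∀ j, X j) :
    Em N T X A Q1 Qk ψ a xd τ xv (τ : ℕ)
      = ∏ i, Wi N T X A Q1 Qk ψ a xd i τ (xv i) := by
  rw [Em_base]
  have step1 : ∀ x' : Fin T → ∀ j, X j,
      (if x' τ = xv ∧ (∀ s : Fin T, (τ : ℕ) < (s : ℕ) → x' s = xd s)
       then Pm N T X A Q1 Qk ψ (τ : ℕ) x' a else 0)
      = ∏ i, (if x' τ i = xv i ∧
                  (∀ s : Fin T, (τ : ℕ) < (s : ℕ) → x' s i = xd s i)
              then wP N T X A Q1 Qk ψ a i (τ : ℕ) (fun s => x' s i) else 0) := by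
    intro x'
    by_cases hC : x' τ = xv ∧ (∀ s : Fin T, (τ : ℕ) < (s : ℕ) → x' s = xd s)
    · rw [if_pos hC, Pm_prod]
      refine Finset.prod_congr rfl fun i _ => ?_
      rw [if_pos ⟨congrFun hC.1 i, fun s hs => congrFun (hC.2 s hs) i⟩]
    · have hnot : ¬ ∀ i : Fin N,
          (x' τ i = xv i ∧ ∀ s : Fin T, (τ : ℕ) < (s : ℕ) → x' s i = xd s i) := by
        intro hall
        exact hC ⟨funext fun i => (hall i).1, fun s hs => funext fun i => (hall i).2 s hs⟩
      obtain ⟨i, hi⟩ := not_forall.mp hnot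
      rw [if_neg hC]
      symm
      refine Finset.prod_eq_zero (Finset.mem_univ i) ?_
      exact if_neg hi
  rw [Finset.sum_congr rfl fun x' _ => step1 x']
  rw [← Fintype.sum_equiv (Equiv.piComm (fun (i : Fin N) (_ : Fin T) => X i))
    (fun g : ∀ i : Fin N, Fin T → X i =>
      ∏ i, (if g i τ = xv i ∧ (∀ s : Fin T, (τ : ℕ) < (s : ℕ) → g i s = xd s i)
          then wP N T X A Q1 Qk ψ a i (τ : ℕ) (g i) else 0))
    _ (fun g => rfl)]
  rw [sum_pi_prod (fun (i : Fin N) (xi : Fin T → X i) =>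
    if xi τ = xv i ∧ (∀ s : Fin T, (τ : ℕ) < (s : ℕ) → xi s = xd s i)
    then wP N T X A Q1 Qk ψ a i (τ : ℕ) xi else 0)]
  rfl

lemma Wi_base (ψ : CAPolicy N T X A) (a : Fin T → ∀ j, A j) (xd : Fin T → ∀ j, X j)
    (i : Fin N) (tf : Fin T) (h0 : (tf : ℕ) = 0) (x : X i) :
    Wi N T X A Q1 Qk ψ a xd i tf x = Q1 i x := by
  have hT : 0 < T := tf.pos
  unfold Wi
  rw [Finset.sum_eq_single (fun s => if s = tf then x else xd s i)]
  · rw [if_pos]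
    · unfold wP
      rw [dif_pos hT]
      have h1 : (⟨0, hT⟩ : Fin T) = tf := Fin.ext h0.symm
      have h2 : (∏ s : Fin T, if (s : ℕ) < (tf : ℕ) then
          ψ i s a ((fun s => if s = tf then x else xd s i) s) (a s i) *
          (if h : (s : ℕ) + 1 < T then
            Qk i ⟨(s : ℕ) + 1, h⟩ ((fun s => if s = tf then x else xd s i) s) (a s)
              ((fun s => if s = tf then x else xd s i) ⟨(s : ℕ) + 1, h⟩) else 1)
          else 1) = 1 := by
        refine Finset.prod_eq_one fun s _ => if_neg (by omega)
      rw [h2, h1, mul_one]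
      dsimp only
      rw [if_pos rfl]
    · refine ⟨if_pos rfl, fun s hs => if_neg fun h => ?_⟩
      rw [h, h0] at hs
      exact absurd hs (lt_irrefl 0)
  · intro b _ hb
    rw [if_neg]
    rintro ⟨hbt, hbp⟩
    apply hb
    funext s
    by_cases hst : s = tf
    · rw [hst, if_pos rfl, hbt]
    · have hs0 : (tf : ℕ) < (s : ℕ) := by
        have : (s : ℕ) ≠ (tf : ℕ) := fun h => hst (Fin.ext h)
        omega
      rw [if_neg hst, hbp s hs0]
  · intro h; exact absurd (Finset.mem_univ _) h

lemma Wi_rec (ψ : CAPolicy N T X A) (a : Fin T → ∀ j, A j) (xd : Fin T → ∀ j, X j)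
    (i : Fin N) (tf tf' : Fin T) (h1 : (tf' : ℕ) = (tf : ℕ) + 1) (x' : X i) :
    Wi N T X A Q1 Qk ψ a xd i tf' x'
      = ∑ x : X i, Wi N T X A Q1 Qk ψ a xd i tf x *
          (ψ i tf a x (a tf i) * Qk i tf' x (a tf) x') := by
  have htT : (tf : ℕ) + 1 < T := by rw [← h1]; exact tf'.isLt
  have hmf : (⟨(tf : ℕ), tf.isLt⟩ : Fin T) = tf := Fin.ext rfl
  have hmf1 : (⟨(tf : ℕ) + 1, htT⟩ : Fin T) = tf' := Fin.ext h1.symm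
  have htfne : tf ≠ tf' := by
    intro h
    rw [← h] at h1
    omega
  have hne' : ∀ s : Fin T, (tf' : ℕ) < (s : ℕ) → s ≠ tf' := by
    intro s hs he
    rw [he] at hs
    exact lt_irrefl _ hs
  unfold Wi
  have e1 : ∀ xi : Fin T → X i,
      (if xi tf' = x' ∧ (∀ s : Fin T, (tf' : ℕ) < (s : ℕ) → xi s = xd s i)
       then wP N T X A Q1 Qk ψ a i (tf' : ℕ) xi else 0)
      = (if xi tf' = x' ∧ (∀ s : Fin T, (tf' : ℕ) < (s : ℕ) → xi s = xd s i)
         then wP N T X A Q1 Qk ψ a i (tf : ℕ) xi *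
            (ψ i tf a (xi tf) (a tf i) * Qk i tf' (xi tf) (a tf) x') else 0) := by
    intro xi
    by_cases hC : xi tf' = x' ∧ (∀ s : Fin T, (tf' : ℕ) < (s : ℕ) → xi s = xd s i)
    · rw [if_pos hC, if_pos hC]
      have hwp : wP N T X A Q1 Qk ψ a i (tf' : ℕ) xi
          = wP N T X A Q1 Qk ψ a i ((tf : ℕ) + 1) xi := by rw [h1]
      rw [hwp, wP_succ N T X A Q1 Qk ψ a i (tf : ℕ) tf.isLt xi, hmf, dif_pos htT, hmf1,
        hC.1]
    · rw [if_neg hC, if_neg hC]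
  rw [Finset.sum_congr rfl fun xi _ => e1 xi]
  have e2 : ∀ xi : Fin T → X i,
      (if xi tf' = x' ∧ (∀ s : Fin T, (tf' : ℕ) < (s : ℕ) → xi s = xd s i)
       then wP N T X A Q1 Qk ψ a i (tf : ℕ) xi *
          (ψ i tf a (xi tf) (a tf i) * Qk i tf' (xi tf) (a tf) x') else 0)
      = ∑ x : X i, if xi tf = x then
          (if xi tf' = x' ∧ (∀ s : Fin T, (tf' : ℕ) < (s : ℕ) → xi s = xd s i)
           then wP N T X A Q1 Qk ψ a i (tf : ℕ) xi *
              (ψ i tf a x (a tf i) * Qk i tf' x (a tf) x') else 0) else 0 := by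
    intro xi
    rw [Finset.sum_ite_eq Finset.univ (xi tf) (fun x =>
      (if xi tf' = x' ∧ (∀ s : Fin T, (tf' : ℕ) < (s : ℕ) → xi s = xd s i)
       then wP N T X A Q1 Qk ψ a i (tf : ℕ) xi *
          (ψ i tf a x (a tf i) * Qk i tf' x (a tf) x') else 0))]
    simp
  rw [Finset.sum_congr rfl fun xi _ => e2 xi]
  rw [Finset.sum_comm]
  refine Finset.sum_congr rfl fun x _ => ?_
  have e3 : ∀ xi : Fin T → X i,
      (if xi tf = x then
        (if xi tf' = x' ∧ (∀ s : Fin T, (tf' : ℕ) < (s : ℕ) → xi s = xd s i)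
         then wP N T X A Q1 Qk ψ a i (tf : ℕ) xi *
            (ψ i tf a x (a tf i) * Qk i tf' x (a tf) x') else 0) else 0)
      = (if xi tf' = x' then
          (if xi tf = x ∧ (∀ s : Fin T, (tf' : ℕ) < (s : ℕ) → xi s = xd s i)
           then wP N T X A Q1 Qk ψ a i (tf : ℕ) xi else 0) else 0) *
          (ψ i tf a x (a tf i) * Qk i tf' x (a tf) x') := by
    intro xi
    by_cases h1' : xi tf = x <;>
      by_cases h2' : xi tf' = x' <;>
        by_cases h3' : (∀ s : Fin T, (tf' : ℕ) < (s : ℕ) → xi s = xd s i) <;>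
          simp [h1', h2', h3', mul_assoc]
  rw [Finset.sum_congr rfl fun xi _ => e3 xi, ← Finset.sum_mul]
  have e5 : (∑ xi : Fin T → X i, if xi tf' = x' then
          (if xi tf = x ∧ (∀ s : Fin T, (tf' : ℕ) < (s : ℕ) → xi s = xd s i)
           then wP N T X A Q1 Qk ψ a i (tf : ℕ) xi else 0) else 0)
      = ∑ xi : Fin T → X i, if xi tf' = xd tf' i then
          (if xi tf = x ∧ (∀ s : Fin T, (tf' : ℕ) < (s : ℕ) → xi s = xd s i)
           then wP N T X A Q1 Qk ψ a i (tf : ℕ) xi else 0) else 0 := by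
    refine repin _ tf' x' (xd tf' i) ?_
    intro f b
    have hupd_tf : Function.update f tf' b tf = f tf :=
      Function.update_of_ne htfne b f
    have hP' : (∀ s : Fin T, (tf' : ℕ) < (s : ℕ) → Function.update f tf' b s = xd s i)
        ↔ (∀ s : Fin T, (tf' : ℕ) < (s : ℕ) → f s = xd s i) := by
      constructor
      · intro h s hs
        have := h s hs
        rwa [Function.update_of_ne (hne' s hs) b f] at this
      · intro h s hs
        rw [Function.update_of_ne (hne' s hs) b f]
        exact h s hs
    have hwp : wP N T X A Q1 Qk ψ a i (tf : ℕ) (Function.update f tf' b)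
        = wP N T X A Q1 Qk ψ a i (tf : ℕ) f := by
      refine wP_congr N T X A Q1 Qk ψ a i (tf : ℕ) _ _ fun s hs => ?_
      have hsne : s ≠ tf' := by
        intro he
        rw [he] at hs
        omega
      exact Function.update_of_ne hsne b f
    by_cases hc0 : f tf = x ∧ (∀ s : Fin T, (tf' : ℕ) < (s : ℕ) → f s = xd s i)
    · rw [if_pos (by rw [hupd_tf]; exact ⟨hc0.1, hP'.mpr hc0.2⟩), if_pos hc0, hwp]
    · rw [if_neg (fun hh => hc0 ⟨by rw [← hupd_tf]; exact hh.1, hP'.mp hh.2⟩),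
        if_neg hc0]
  rw [e5]
  congr 1
  refine Finset.sum_congr rfl fun xi _ => ?_
  rw [← ite_and]
  refine if_congr ?_ rfl rfl
  constructor
  · rintro ⟨hp, hx, hP⟩
    refine ⟨hx, fun s hs => ?_⟩
    by_cases hs' : (s : ℕ) = (tf' : ℕ)
    · rw [Fin.ext hs']
      exact hp
    · exact hP s (by omega)
  · rintro ⟨hx, hall⟩
    exact ⟨hall tf' (by omega), hx, fun s hs => hall s (by omega)⟩

lemma Em_step (ψ : CAPolicy N T X A) (a : Fin T → ∀ j, A j) (xd : Fin T → ∀ j, X j)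
    (hc : CACausal N T X A ψ) (hψ : CAStochastic N T X A ψ)
    (hK : StochKer N T X A Q1 Qk)
    (τ : Fin T) (xv : ∀ j, X j) (m : ℕ) (hτm : (τ : ℕ) ≤ m) (hm : m < T) :
    Em N T X A Q1 Qk ψ a xd τ xv (m + 1) = Em N T X A Q1 Qk ψ a xd τ xv m := by
  have stepA : ∀ a' : Fin T → ∀ j, A j,
      (∑ x' : Fin T → ∀ j, X j,
        if ((∀ s : Fin T, (s : ℕ) < (τ : ℕ) → a' s = a s)
              ∧ (∀ s : Fin T, m + 1 ≤ (s : ℕ) → a' s = a s))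
            ∧ (x' τ = xv ∧ (∀ s : Fin T, m + 1 < (s : ℕ) → x' s = xd s))
        then Pm N T X A Q1 Qk ψ (m + 1) x' a' else 0)
      = ∑ x' : Fin T → ∀ j, X j,
          if ((∀ s : Fin T, (s : ℕ) < (τ : ℕ) → a' s = a s)
                ∧ (∀ s : Fin T, m + 1 ≤ (s : ℕ) → a' s = a s))
              ∧ (x' τ = xv ∧ (∀ s : Fin T, m < (s : ℕ) → x' s = xd s))
          then Pm N T X A Q1 Qk ψ m x' a' *
            ∏ i, ψ i ⟨m, hm⟩ a' (x' ⟨m, hm⟩ i) (a' ⟨m, hm⟩ i) else 0 := by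
    intro a'
    by_cases h2 : m + 1 < T
    · -- the coordinate `x' (m+1)` exists: sum it out against the kernels
      have hτne1 : τ ≠ (⟨m + 1, h2⟩ : Fin T) := by
        intro he
        have : (τ : ℕ) = m + 1 := by rw [he]
        omega
      refine Eq.trans (sum_out _
        (fun x' => if ((∀ s : Fin T, (s : ℕ) < (τ : ℕ) → a' s = a s)
              ∧ (∀ s : Fin T, m + 1 ≤ (s : ℕ) → a' s = a s))
            ∧ (x' τ = xv ∧ (∀ s : Fin T, m + 1 < (s : ℕ) → x' s = xd s))
          then Pm N T X A Q1 Qk ψ m x' a' *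
            ∏ i, ψ i ⟨m, hm⟩ a' (x' ⟨m, hm⟩ i) (a' ⟨m, hm⟩ i) else 0)
        (⟨m + 1, h2⟩ : Fin T) (xd ⟨m + 1, h2⟩) ?_) ?_
      · intro x' hpin
        have hcond : ∀ v : ∀ j, X j,
            ((Function.update x' ⟨m + 1, h2⟩ v) τ = xv
              ∧ (∀ s : Fin T, m + 1 < (s : ℕ) →
                  (Function.update x' ⟨m + 1, h2⟩ v) s = xd s))
            ↔ (x' τ = xv ∧ (∀ s : Fin T, m + 1 < (s : ℕ) → x' s = xd s)) := by
          intro v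
          have h1 : (Function.update x' ⟨m + 1, h2⟩ v) τ = x' τ :=
            Function.update_of_ne hτne1 v x'
          have h3 : ∀ s : Fin T, m + 1 < (s : ℕ) →
              (Function.update x' ⟨m + 1, h2⟩ v) s = x' s := by
            intro s hs
            refine Function.update_of_ne (fun he => ?_) v x'
            rw [he] at hs
            simp at hs
          constructor
          · rintro ⟨hx1, hx2⟩
            exact ⟨by rw [← h1]; exact hx1, fun s hs => by rw [← h3 s hs]; exact hx2 s hs⟩
          · rintro ⟨hx1, hx2⟩
            exact ⟨by rw [h1]; exact hx1, fun s hs => by rw [h3 s hs]; exact hx2 s hs⟩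
        have hval : ∀ v : ∀ j, X j,
            Pm N T X A Q1 Qk ψ (m + 1) (Function.update x' ⟨m + 1, h2⟩ v) a'
            = (Pm N T X A Q1 Qk ψ m x' a' *
                ∏ i, ψ i ⟨m, hm⟩ a' (x' ⟨m, hm⟩ i) (a' ⟨m, hm⟩ i)) *
              ∏ i, Qk i ⟨m + 1, h2⟩ (x' ⟨m, hm⟩ i) (a' ⟨m, hm⟩) (v i) := by
          intro v
          rw [Pm_succ N T X A Q1 Qk ψ m hm]
          have hmne : (⟨m, hm⟩ : Fin T) ≠ ⟨m + 1, h2⟩ := by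
            intro he
            have : m = m + 1 := congrArg Fin.val he
            omega
          have hu1 : (Function.update x' ⟨m + 1, h2⟩ v) ⟨m, hm⟩ = x' ⟨m, hm⟩ :=
            Function.update_of_ne hmne v x'
          have hu2 : (Function.update x' ⟨m + 1, h2⟩ v) ⟨m + 1, h2⟩ = v :=
            Function.update_self _ v x'
          have hPm : Pm N T X A Q1 Qk ψ m (Function.update x' ⟨m + 1, h2⟩ v) a'
              = Pm N T X A Q1 Qk ψ m x' a' := by
            refine Pm_congr N T X A Q1 Qk ψ hc m _ _ _ _ (fun s hs => ?_) (fun s _ => rfl)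
            refine Function.update_of_ne (fun he => ?_) v x'
            have : (s : ℕ) = m + 1 := by rw [he]
            omega
          have hq : ∀ i : Fin N, (if h : m + 1 < T then
                Qk i ⟨m + 1, h⟩ ((Function.update x' ⟨m + 1, h2⟩ v) ⟨m, hm⟩ i)
                  (a' ⟨m, hm⟩) ((Function.update x' ⟨m + 1, h2⟩ v) ⟨m + 1, h⟩ i) else 1)
              = Qk i ⟨m + 1, h2⟩ (x' ⟨m, hm⟩ i) (a' ⟨m, hm⟩) (v i) := by
            intro i
            rw [dif_pos h2, hu1, hu2]
          rw [hPm]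
          rw [Finset.prod_congr rfl fun i (_ : i ∈ Finset.univ) => hq i]
          rw [hu1]
          ring
        calc (∑ v : ∀ j, X j,
              if ((∀ s : Fin T, (s : ℕ) < (τ : ℕ) → a' s = a s)
                    ∧ (∀ s : Fin T, m + 1 ≤ (s : ℕ) → a' s = a s))
                  ∧ ((Function.update x' ⟨m + 1, h2⟩ v) τ = xv
                    ∧ (∀ s : Fin T, m + 1 < (s : ℕ) →
                        (Function.update x' ⟨m + 1, h2⟩ v) s = xd s))
               then Pm N T X A Q1 Qk ψ (m + 1) (Function.update x' ⟨m + 1, h2⟩ v) a' else 0)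
            = ∑ v : ∀ j, X j,
              (if ((∀ s : Fin T, (s : ℕ) < (τ : ℕ) → a' s = a s)
                    ∧ (∀ s : Fin T, m + 1 ≤ (s : ℕ) → a' s = a s))
                  ∧ (x' τ = xv ∧ (∀ s : Fin T, m + 1 < (s : ℕ) → x' s = xd s))
               then Pm N T X A Q1 Qk ψ m x' a' *
                    ∏ i, ψ i ⟨m, hm⟩ a' (x' ⟨m, hm⟩ i) (a' ⟨m, hm⟩ i) else 0) *
                  ∏ i, Qk i ⟨m + 1, h2⟩ (x' ⟨m, hm⟩ i) (a' ⟨m, hm⟩) (v i) := by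
              refine Finset.sum_congr rfl fun v _ => ?_
              rw [hval v, ite_mul, zero_mul]
              exact if_congr (and_congr Iff.rfl (hcond v)) rfl rfl
          _ = (if ((∀ s : Fin T, (s : ℕ) < (τ : ℕ) → a' s = a s)
                    ∧ (∀ s : Fin T, m + 1 ≤ (s : ℕ) → a' s = a s))
                  ∧ (x' τ = xv ∧ (∀ s : Fin T, m + 1 < (s : ℕ) → x' s = xd s))
               then Pm N T X A Q1 Qk ψ m x' a' *
                    ∏ i, ψ i ⟨m, hm⟩ a' (x' ⟨m, hm⟩ i) (a' ⟨m, hm⟩ i) else 0) := by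
              rw [← Finset.mul_sum]
              rw [sum_pi_prod (fun (i : Fin N) (y : X i) =>
                Qk i ⟨m + 1, h2⟩ (x' ⟨m, hm⟩ i) (a' ⟨m, hm⟩) y)]
              rw [Finset.prod_eq_one fun i _ => (hK.2 i ⟨m + 1, h2⟩ (x' ⟨m, hm⟩ i)
                (a' ⟨m, hm⟩)).2, mul_one]
      · -- recombine the indicator of the pinned coordinate
        refine Finset.sum_congr rfl fun x' _ => ?_
        refine nested_ite (Iff.symm ?_) _
        constructor
        · rintro ⟨hp, hA, hx1, hx2⟩
          refine ⟨hA, hx1, fun s hs => ?_⟩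
          by_cases hs' : (s : ℕ) = m + 1
          · rw [show s = (⟨m + 1, h2⟩ : Fin T) from Fin.ext hs']
            exact hp
          · exact hx2 s (by omega)
        · rintro ⟨hA, hx1, hx2⟩
          exact ⟨hx2 ⟨m + 1, h2⟩ (by simp), hA, hx1, fun s hs => hx2 s (by omega)⟩
    · -- no coordinate `m+1`: the kernel factor is trivial
      refine Finset.sum_congr rfl fun x' _ => ?_
      have hvac : ∀ s : Fin T, m + 1 < (s : ℕ) ↔ False := by
        intro s
        have := s.isLt
        constructor
        · intro h; omega
        · intro h; exact h.elim
      have hvac' : ∀ s : Fin T, m < (s : ℕ) ↔ False := by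
        intro s
        have := s.isLt
        constructor
        · intro h; omega
        · intro h; exact h.elim
      have hPm : Pm N T X A Q1 Qk ψ (m + 1) x' a'
          = Pm N T X A Q1 Qk ψ m x' a' *
            ∏ i, ψ i ⟨m, hm⟩ a' (x' ⟨m, hm⟩ i) (a' ⟨m, hm⟩ i) := by
        rw [Pm_succ N T X A Q1 Qk ψ m hm]
        rw [Finset.prod_congr rfl fun i (_ : i ∈ Finset.univ) => dif_neg h2]
        rw [Finset.prod_const_one, mul_one]
      rw [hPm]
      refine if_congr ?_ rfl rfl
      constructor
      · rintro ⟨hA, hx1, _⟩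
        exact ⟨hA, hx1, fun s hs => absurd hs (by rw [hvac' s]; exact not_false)⟩
      · rintro ⟨hA, hx1, _⟩
        exact ⟨hA, hx1, fun s hs => absurd hs (by rw [hvac s]; exact not_false)⟩
  have stepB : ∀ x' : Fin T → ∀ j, X j,
      (∑ a' : Fin T → ∀ j, A j,
        if ((∀ s : Fin T, (s : ℕ) < (τ : ℕ) → a' s = a s)
              ∧ (∀ s : Fin T, m + 1 ≤ (s : ℕ) → a' s = a s))
            ∧ (x' τ = xv ∧ (∀ s : Fin T, m < (s : ℕ) → x' s = xd s))
        then Pm N T X A Q1 Qk ψ m x' a' *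
          ∏ i, ψ i ⟨m, hm⟩ a' (x' ⟨m, hm⟩ i) (a' ⟨m, hm⟩ i) else 0)
      = ∑ a' : Fin T → ∀ j, A j,
          if ((∀ s : Fin T, (s : ℕ) < (τ : ℕ) → a' s = a s)
                ∧ (∀ s : Fin T, m ≤ (s : ℕ) → a' s = a s))
              ∧ (x' τ = xv ∧ (∀ s : Fin T, m < (s : ℕ) → x' s = xd s))
          then Pm N T X A Q1 Qk ψ m x' a' else 0 := by
    intro x'
    have hmne : ∀ s : Fin T, (s : ℕ) ≠ m → s ≠ (⟨m, hm⟩ : Fin T) := by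
      intro s hs he
      exact hs (congrArg Fin.val he)
    refine Eq.trans (sum_out _
      (fun a' => if ((∀ s : Fin T, (s : ℕ) < (τ : ℕ) → a' s = a s)
              ∧ (∀ s : Fin T, m + 1 ≤ (s : ℕ) → a' s = a s))
            ∧ (x' τ = xv ∧ (∀ s : Fin T, m < (s : ℕ) → x' s = xd s))
        then Pm N T X A Q1 Qk ψ m x' a' else 0)
      (⟨m, hm⟩ : Fin T) (a ⟨m, hm⟩) ?_) ?_
    · intro a' hpin
      have hcond : ∀ b : ∀ j, A j,
          ((∀ s : Fin T, (s : ℕ) < (τ : ℕ) → (Function.update a' ⟨m, hm⟩ b) s = a s)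
            ∧ (∀ s : Fin T, m + 1 ≤ (s : ℕ) → (Function.update a' ⟨m, hm⟩ b) s = a s))
          ↔ ((∀ s : Fin T, (s : ℕ) < (τ : ℕ) → a' s = a s)
            ∧ (∀ s : Fin T, m + 1 ≤ (s : ℕ) → a' s = a s)) := by
        intro b
        have h1 : ∀ s : Fin T, (s : ℕ) < (τ : ℕ) →
            (Function.update a' ⟨m, hm⟩ b) s = a' s := by
          intro s hs
          exact Function.update_of_ne (hmne s (by omega)) b a'
        have h2 : ∀ s : Fin T, m + 1 ≤ (s : ℕ) →
            (Function.update a' ⟨m, hm⟩ b) s = a' s := by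
          intro s hs
          exact Function.update_of_ne (hmne s (by omega)) b a'
        constructor
        · rintro ⟨u1, u2⟩
          exact ⟨fun s hs => by rw [← h1 s hs]; exact u1 s hs,
            fun s hs => by rw [← h2 s hs]; exact u2 s hs⟩
        · rintro ⟨u1, u2⟩
          exact ⟨fun s hs => by rw [h1 s hs]; exact u1 s hs,
            fun s hs => by rw [h2 s hs]; exact u2 s hs⟩
      have hPm : ∀ b : ∀ j, A j,
          Pm N T X A Q1 Qk ψ m x' (Function.update a' ⟨m, hm⟩ b)
          = Pm N T X A Q1 Qk ψ m x' a' := by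
        intro b
        refine Pm_congr N T X A Q1 Qk ψ hc m _ _ _ _ (fun s _ => rfl) (fun s hs => ?_)
        exact Function.update_of_ne (hmne s (by omega)) b a'
      have hψval : ∀ b : ∀ j, A j, ∀ i : Fin N,
          ψ i ⟨m, hm⟩ (Function.update a' ⟨m, hm⟩ b) (x' ⟨m, hm⟩ i)
            ((Function.update a' ⟨m, hm⟩ b) ⟨m, hm⟩ i)
          = ψ i ⟨m, hm⟩ a' (x' ⟨m, hm⟩ i) (b i) := by
        intro b i
        rw [Function.update_self]
        rw [hc i ⟨m, hm⟩ (Function.update a' ⟨m, hm⟩ b) a' (x' ⟨m, hm⟩ i)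
          (fun u hu => Function.update_of_ne (hmne u (Nat.ne_of_lt hu)) b a')]
      calc (∑ b : ∀ j, A j,
            if ((∀ s : Fin T, (s : ℕ) < (τ : ℕ) → (Function.update a' ⟨m, hm⟩ b) s = a s)
                  ∧ (∀ s : Fin T, m + 1 ≤ (s : ℕ) → (Function.update a' ⟨m, hm⟩ b) s = a s))
                ∧ (x' τ = xv ∧ (∀ s : Fin T, m < (s : ℕ) → x' s = xd s))
             then Pm N T X A Q1 Qk ψ m x' (Function.update a' ⟨m, hm⟩ b) *
               ∏ i, ψ i ⟨m, hm⟩ (Function.update a' ⟨m, hm⟩ b) (x' ⟨m, hm⟩ i)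
                 ((Function.update a' ⟨m, hm⟩ b) ⟨m, hm⟩ i) else 0)
          = ∑ b : ∀ j, A j,
            (if ((∀ s : Fin T, (s : ℕ) < (τ : ℕ) → a' s = a s)
                  ∧ (∀ s : Fin T, m + 1 ≤ (s : ℕ) → a' s = a s))
                ∧ (x' τ = xv ∧ (∀ s : Fin T, m < (s : ℕ) → x' s = xd s))
             then Pm N T X A Q1 Qk ψ m x' a' else 0) *
               ∏ i, ψ i ⟨m, hm⟩ a' (x' ⟨m, hm⟩ i) (b i) := by
            refine Finset.sum_congr rfl fun b _ => ?_
            rw [hPm b, Finset.prod_congr rfl fun i (_ : i ∈ Finset.univ) => hψval b i,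
              ite_mul, zero_mul]
            exact if_congr (and_congr (hcond b) Iff.rfl) rfl rfl
        _ = (if ((∀ s : Fin T, (s : ℕ) < (τ : ℕ) → a' s = a s)
                  ∧ (∀ s : Fin T, m + 1 ≤ (s : ℕ) → a' s = a s))
                ∧ (x' τ = xv ∧ (∀ s : Fin T, m < (s : ℕ) → x' s = xd s))
             then Pm N T X A Q1 Qk ψ m x' a' else 0) := by
            rw [← Finset.mul_sum]
            rw [sum_pi_prod (fun (i : Fin N) (y : A i) =>
              ψ i ⟨m, hm⟩ a' (x' ⟨m, hm⟩ i) y)]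
            rw [Finset.prod_eq_one fun i _ => (hψ i ⟨m, hm⟩ a' (x' ⟨m, hm⟩ i)).2, mul_one]
    · -- recombine the indicator of the pinned action
      refine Finset.sum_congr rfl fun a' _ => ?_
      refine nested_ite (Iff.symm ?_) _
      constructor
      · rintro ⟨hp, ⟨h1', h2'⟩, hx⟩
        refine ⟨⟨h1', fun s hs => ?_⟩, hx⟩
        by_cases hs' : (s : ℕ) = m
        · rw [show s = (⟨m, hm⟩ : Fin T) from Fin.ext hs']
          exact hp
        · exact h2' s (by omega)
      · rintro ⟨⟨h1', h2'⟩, hx⟩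
        exact ⟨h2' ⟨m, hm⟩ (by simp), ⟨h1', fun s hs => h2' s (by omega)⟩, hx⟩
  unfold Em
  rw [Finset.sum_comm]
  rw [Finset.sum_congr rfl fun a' (_ : a' ∈ Finset.univ) => stepA a']
  rw [Finset.sum_comm]
  exact Finset.sum_congr rfl fun x' (_ : x' ∈ Finset.univ) => stepB x' 

lemma Wi_nonneg (ψ : CAPolicy N T X A) (a : Fin T → ∀ j, A j) (xd : Fin T → ∀ j, X j)
    (hψ : CAStochastic N T X A ψ) (hK : StochKer N T X A Q1 Qk)
    (i : Fin N) (tf : Fin T) (x : X i) :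
    0 ≤ Wi N T X A Q1 Qk ψ a xd i tf x := by
  unfold Wi
  refine Finset.sum_nonneg fun xi _ => ?_
  by_cases hC : xi tf = x ∧ (∀ s : Fin T, (tf : ℕ) < (s : ℕ) → xi s = xd s i)
  · rw [if_pos hC]
    unfold wP
    refine mul_nonneg ?_ (Finset.prod_nonneg fun s _ => ?_)
    · by_cases h : 0 < T
      · rw [dif_pos h]; exact (hK.1 i).1 _
      · rw [dif_neg h]; exact zero_le_one
    · by_cases hs : (s : ℕ) < (tf : ℕ)
      · rw [if_pos hs]
        refine mul_nonneg ((hψ i s a (xi s)).1 _) ?_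
        by_cases h : (s : ℕ) + 1 < T
        · rw [dif_pos h]; exact (hK.2 i _ _ _).1 _
        · rw [dif_neg h]; exact zero_le_one
      · rw [if_neg hs]; exact zero_le_one
  · rw [if_neg hC]

lemma num_joint_eq (ψ : CAPolicy N T X A) (a : Fin T → ∀ j, A j) (xd : Fin T → ∀ j, X j)
    (hc : CACausal N T X A ψ) (hψ : CAStochastic N T X A ψ)
    (hK : StochKer N T X A Q1 Qk) (τ : Fin T) (xv : ∀ j, X j) :
    (∑ x' : Fin T → ∀ j, X j, ∑ a' : Fin T → ∀ j, A j,
        if (∀ s : Fin T, (s : ℕ) < (τ : ℕ) → a' s = a s) ∧ x' τ = xv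
        then trajP N T X A Q1 Qk (caStrat N T X A ψ) x' a' else 0)
      = ∏ i, Wi N T X A Q1 Qk ψ a xd i τ (xv i) := by
  rw [← Em_top N T X A Q1 Qk ψ a xd τ xv]
  have key : ∀ n : ℕ, (τ : ℕ) ≤ n → n ≤ T →
      Em N T X A Q1 Qk ψ a xd τ xv n = Em N T X A Q1 Qk ψ a xd τ xv (τ : ℕ) := by
    intro n
    induction n with
    | zero =>
      intro hn _
      have : (τ : ℕ) = 0 := Nat.le_zero.mp hn
      rw [this]
    | succ k ih =>
      intro hn hT'
      by_cases hk : (τ : ℕ) ≤ k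
      · rw [Em_step N T X A Q1 Qk ψ a xd hc hψ hK τ xv k hk (by omega)]
        exact ih hk (by omega)
      · have : (τ : ℕ) = k + 1 := by omega
        rw [this]
  rw [key T (le_of_lt τ.isLt) (le_refl T)]
  exact Em_base_prod N T X A Q1 Qk ψ a xd τ xv

lemma aMarg_eq (ψ : CAPolicy N T X A) (a : Fin T → ∀ j, A j) (xd : Fin T → ∀ j, X j)
    (hc : CACausal N T X A ψ) (hψ : CAStochastic N T X A ψ)
    (hK : StochKer N T X A Q1 Qk) (τ : Fin T) :
    aMarg N T X A Q1 Qk (caStrat N T X A ψ) ((τ : ℕ) + 1) a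
      = ∏ i, ∑ x, Wi N T X A Q1 Qk ψ a xd i τ x := by
  unfold aMarg
  have e1 : ∀ x' : Fin T → ∀ j, X j, ∀ a' : Fin T → ∀ j, A j,
      (if (∀ s : Fin T, (s : ℕ) + 1 < (τ : ℕ) + 1 → a' s = a s)
       then trajP N T X A Q1 Qk (caStrat N T X A ψ) x' a' else 0)
      = ∑ xv : ∀ j, X j,
          if (∀ s : Fin T, (s : ℕ) < (τ : ℕ) → a' s = a s) ∧ x' τ = xv
          then trajP N T X A Q1 Qk (caStrat N T X A ψ) x' a' else 0 := by
    intro x' a'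
    have hiff : (∀ s : Fin T, (s : ℕ) + 1 < (τ : ℕ) + 1 → a' s = a s)
        ↔ (∀ s : Fin T, (s : ℕ) < (τ : ℕ) → a' s = a s) := by
      constructor <;> intro h s hs <;> exact h s (by omega)
    by_cases hC : (∀ s : Fin T, (s : ℕ) < (τ : ℕ) → a' s = a s)
    · rw [if_pos (hiff.mpr hC)]
      symm
      calc (∑ xv : ∀ j, X j, if (∀ s : Fin T, (s : ℕ) < (τ : ℕ) → a' s = a s) ∧ x' τ = xv
              then trajP N T X A Q1 Qk (caStrat N T X A ψ) x' a' else 0)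
          = ∑ xv : ∀ j, X j, if x' τ = xv
              then trajP N T X A Q1 Qk (caStrat N T X A ψ) x' a' else 0 :=
            Finset.sum_congr rfl fun xv _ => if_congr (and_iff_right hC) rfl rfl
        _ = trajP N T X A Q1 Qk (caStrat N T X A ψ) x' a' := by
            rw [Finset.sum_ite_eq Finset.univ (x' τ)
              (fun _ => trajP N T X A Q1 Qk (caStrat N T X A ψ) x' a')]
            simp
    · rw [if_neg (fun hh => hC (hiff.mp hh))]
      symm
      exact Finset.sum_eq_zero fun xv _ => if_neg (fun hh => hC hh.1)
  rw [Finset.sum_congr rfl fun x' (_ : x' ∈ Finset.univ) =>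
    Finset.sum_congr rfl fun a' (_ : a' ∈ Finset.univ) => e1 x' a']
  rw [Finset.sum_congr rfl fun x' (_ : x' ∈ Finset.univ) => Finset.sum_comm]
  rw [Finset.sum_comm]
  rw [Finset.sum_congr rfl fun xv (_ : xv ∈ Finset.univ) =>
    num_joint_eq N T X A Q1 Qk ψ a xd hc hψ hK τ xv]
  rw [sum_pi_prod (fun (i : Fin N) (x : X i) => Wi N T X A Q1 Qk ψ a xd i τ x)]

lemma num_i_eq (ψ : CAPolicy N T X A) (a : Fin T → ∀ j, A j) (xd : Fin T → ∀ j, X j)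
    (hc : CACausal N T X A ψ) (hψ : CAStochastic N T X A ψ)
    (hK : StochKer N T X A Q1 Qk) (τ : Fin T) (i : Fin N) (xiv : X i) :
    (∑ x' : Fin T → ∀ j, X j, ∑ a' : Fin T → ∀ j, A j,
        if (∀ s : Fin T, (s : ℕ) < (τ : ℕ) → a' s = a s) ∧ x' τ i = xiv
        then trajP N T X A Q1 Qk (caStrat N T X A ψ) x' a' else 0)
      = Wi N T X A Q1 Qk ψ a xd i τ xiv *
          ∏ j ∈ Finset.univ.erase i, ∑ x, Wi N T X A Q1 Qk ψ a xd j τ x := by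
  have e1 : ∀ x' : Fin T → ∀ j, X j, ∀ a' : Fin T → ∀ j, A j,
      (if (∀ s : Fin T, (s : ℕ) < (τ : ℕ) → a' s = a s) ∧ x' τ i = xiv
       then trajP N T X A Q1 Qk (caStrat N T X A ψ) x' a' else 0)
      = ∑ xv : ∀ j, X j,
          if xv i = xiv
          then (if (∀ s : Fin T, (s : ℕ) < (τ : ℕ) → a' s = a s) ∧ x' τ = xv
            then trajP N T X A Q1 Qk (caStrat N T X A ψ) x' a' else 0) else 0 := by
    intro x' a'
    have shape : ∀ xv : ∀ j, X j,
        (if xv i = xiv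
         then (if (∀ s : Fin T, (s : ℕ) < (τ : ℕ) → a' s = a s) ∧ x' τ = xv
            then trajP N T X A Q1 Qk (caStrat N T X A ψ) x' a' else 0) else 0)
        = (if x' τ = xv
           then (if (∀ s : Fin T, (s : ℕ) < (τ : ℕ) → a' s = a s) ∧ x' τ i = xiv
              then trajP N T X A Q1 Qk (caStrat N T X A ψ) x' a' else 0) else 0) := by
      intro xv
      by_cases h1 : x' τ = xv
      · subst h1
        split_ifs <;> first | rfl | tauto
      · rw [if_neg h1, if_neg (fun hh : _ ∧ x' τ = xv => h1 hh.2)]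
        split_ifs <;> rfl
    rw [Finset.sum_congr rfl fun xv _ => shape xv]
    rw [Finset.sum_ite_eq Finset.univ (x' τ)
      (fun _ => if (∀ s : Fin T, (s : ℕ) < (τ : ℕ) → a' s = a s) ∧ x' τ i = xiv
        then trajP N T X A Q1 Qk (caStrat N T X A ψ) x' a' else 0)]
    simp
  rw [Finset.sum_congr rfl fun x' (_ : x' ∈ Finset.univ) =>
    Finset.sum_congr rfl fun a' (_ : a' ∈ Finset.univ) => e1 x' a']
  rw [Finset.sum_congr rfl fun x' (_ : x' ∈ Finset.univ) => Finset.sum_comm]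
  rw [Finset.sum_comm]
  have e2 : ∀ xv : ∀ j, X j,
      (∑ x' : Fin T → ∀ j, X j, ∑ a' : Fin T → ∀ j, A j,
        if xv i = xiv
        then (if (∀ s : Fin T, (s : ℕ) < (τ : ℕ) → a' s = a s) ∧ x' τ = xv
          then trajP N T X A Q1 Qk (caStrat N T X A ψ) x' a' else 0) else 0)
      = if xv i = xiv then ∏ j, Wi N T X A Q1 Qk ψ a xd j τ (xv j) else 0 := by
    intro xv
    by_cases hxv : xv i = xiv
    · rw [if_pos hxv, ← num_joint_eq N T X A Q1 Qk ψ a xd hc hψ hK τ xv]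
      exact Finset.sum_congr rfl fun x' _ => Finset.sum_congr rfl fun a' _ => if_pos hxv
    · rw [if_neg hxv]
      exact Finset.sum_eq_zero fun x' _ => Finset.sum_eq_zero fun a' _ => if_neg hxv
  rw [Finset.sum_congr rfl fun xv (_ : xv ∈ Finset.univ) => e2 xv]
  have e3 : ∀ xv : ∀ j, X j,
      (if xv i = xiv then ∏ j, Wi N T X A Q1 Qk ψ a xd j τ (xv j) else 0)
      = ∏ j, Function.update (fun j (x : X j) => Wi N T X A Q1 Qk ψ a xd j τ x) i
          (fun x => if x = xiv then Wi N T X A Q1 Qk ψ a xd i τ x else 0) j (xv j) := by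
    intro xv
    by_cases h : xv i = xiv
    · rw [if_pos h]
      refine Finset.prod_congr rfl fun j _ => ?_
      by_cases hj : j = i
      · subst hj
        rw [Function.update_self, if_pos h]
      · rw [Function.update_of_ne hj]
    · rw [if_neg h]
      symm
      refine Finset.prod_eq_zero (Finset.mem_univ i) ?_
      rw [Function.update_self, if_neg h]
  rw [Finset.sum_congr rfl fun xv (_ : xv ∈ Finset.univ) => e3 xv]
  rw [sum_pi_prod (fun (j : Fin N) (x : X j) =>
    Function.update (fun j (x : X j) => Wi N T X A Q1 Qk ψ a xd j τ x) i
      (fun x => if x = xiv then Wi N T X A Q1 Qk ψ a xd i τ x else 0) j x)]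
  rw [← Finset.mul_prod_erase Finset.univ _ (Finset.mem_univ i)]
  congr 1
  · rw [Function.update_self]
    rw [Finset.sum_ite_eq' Finset.univ xiv (fun x => Wi N T X A Q1 Qk ψ a xd i τ x)]
    simp
  · refine Finset.prod_congr rfl fun j hj => ?_
    rw [Function.update_of_ne (Finset.mem_erase.mp hj).1]

lemma Spos (ψ : CAPolicy N T X A) (a : Fin T → ∀ j, A j) (xd : Fin T → ∀ j, X j)
    (hc : CACausal N T X A ψ) (hψ : CAStochastic N T X A ψ)
    (hK : StochKer N T X A Q1 Qk) (τ : Fin T)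
    (hpos : 0 < aMarg N T X A Q1 Qk (caStrat N T X A ψ) ((τ : ℕ) + 1) a) :
    ∀ j : Fin N, 0 < ∑ x, Wi N T X A Q1 Qk ψ a xd j τ x := by
  intro j
  have hnn : 0 ≤ ∑ x, Wi N T X A Q1 Qk ψ a xd j τ x :=
    Finset.sum_nonneg fun x _ => Wi_nonneg N T X A Q1 Qk ψ a xd hψ hK j τ x
  rcases hnn.lt_or_eq with h | h
  · exact h
  · exfalso
    rw [aMarg_eq N T X A Q1 Qk ψ a xd hc hψ hK τ] at hpos
    exact absurd (Finset.prod_eq_zero (Finset.mem_univ j) h.symm) (ne_of_gt hpos)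

lemma bel_eq (ψ : CAPolicy N T X A) (a : Fin T → ∀ j, A j) (xd : Fin T → ∀ j, X j)
    (hc : CACausal N T X A ψ) (hψ : CAStochastic N T X A ψ)
    (hK : StochKer N T X A Q1 Qk) (τ : Fin T)
    (hpos : 0 < aMarg N T X A Q1 Qk (caStrat N T X A ψ) ((τ : ℕ) + 1) a)
    (i : Fin N) (xiv : X i) :
    bel N T X A Q1 Qk ψ i τ a xiv
      = Wi N T X A Q1 Qk ψ a xd i τ xiv / ∑ x, Wi N T X A Q1 Qk ψ a xd i τ x := by
  unfold bel
  rw [num_i_eq N T X A Q1 Qk ψ a xd hc hψ hK τ i xiv,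
      aMarg_eq N T X A Q1 Qk ψ a xd hc hψ hK τ,
      ← Finset.mul_prod_erase Finset.univ _ (Finset.mem_univ i)]
  have hP : (∏ j ∈ Finset.univ.erase i, ∑ x, Wi N T X A Q1 Qk ψ a xd j τ x) ≠ 0 := by
    refine ne_of_gt (Finset.prod_pos fun j _ => ?_)
    exact Spos N T X A Q1 Qk ψ a xd hc hψ hK τ hpos j
  rw [mul_div_mul_right _ _ hP]
/-- belief factorization and recursive update: under any common-agent
policy the common-information belief factorizes into its marginals, and each marginal
updates by the strategy-independent Bayes map `F̄`. -/
theorem belief_factorization_and_update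
    (ψ : CAPolicy N T X A)
    (hK : StochKer N T X A Q1 Qk)
    (hψ : CAStochastic N T X A ψ) (hc : CACausal N T X A ψ)
    (τ : Fin T) (a : Fin T → ∀ j, A j)
    (hpos : 0 < aMarg N T X A Q1 Qk (caStrat N T X A ψ) ((τ : ℕ) + 1) a) :
    (∀ xv : ∀ j, X j,
        belJoint N T X A Q1 Qk ψ τ a xv = ∏ i, bel N T X A Q1 Qk ψ i τ a (xv i)) ∧
    (∀ (h1 : (τ : ℕ) + 1 < T),
      0 < aMarg N T X A Q1 Qk (caStrat N T X A ψ) ((τ : ℕ) + 2) a →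
      ∀ (i : Fin N) (xiv : X i),
        bel N T X A Q1 Qk ψ i ⟨(τ : ℕ) + 1, h1⟩ a xiv
          = Fbar (fun x x' => Qk i ⟨(τ : ℕ) + 1, h1⟩ x (a τ) x')
              (bel N T X A Q1 Qk ψ i τ a)
              (fun x => ψ i τ a x (a τ i)) xiv) := by
  have hne : ∀ j : Fin N, Nonempty (X j) := by
    intro j
    by_contra h
    rw [not_nonempty_iff] at h
    have h2 := (hK.1 j).2
    rw [Finset.univ_eq_empty, Finset.sum_empty] at h2
    exact zero_ne_one h2
  let xd : Fin T → ∀ j, X j := fun _ j => (hne j).some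
  constructor
  · intro xv
    unfold belJoint
    rw [num_joint_eq N T X A Q1 Qk ψ a xd hc hψ hK τ xv,
        aMarg_eq N T X A Q1 Qk ψ a xd hc hψ hK τ,
        ← Finset.prod_div_distrib]
    refine Finset.prod_congr rfl fun i _ => ?_
    exact (bel_eq N T X A Q1 Qk ψ a xd hc hψ hK τ hpos i (xv i)).symm
  · intro h1 hpos2 i xiv
    have hpos2' : 0 < aMarg N T X A Q1 Qk (caStrat N T X A ψ)
        (((⟨(τ : ℕ) + 1, h1⟩ : Fin T) : ℕ) + 1) a := hpos2
    have hSpos := Spos N T X A Q1 Qk ψ a xd hc hψ hK τ hpos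
    have hSpos' := Spos N T X A Q1 Qk ψ a xd hc hψ hK ⟨(τ : ℕ) + 1, h1⟩ hpos2'
    have hrec : ∀ y : X i,
        Wi N T X A Q1 Qk ψ a xd i ⟨(τ : ℕ) + 1, h1⟩ y
          = ∑ x, Wi N T X A Q1 Qk ψ a xd i τ x *
              (ψ i τ a x (a τ i) * Qk i ⟨(τ : ℕ) + 1, h1⟩ x (a τ) y) :=
      fun y => Wi_rec N T X A Q1 Qk ψ a xd i τ ⟨(τ : ℕ) + 1, h1⟩ rfl y
    have hS'D : (∑ y, Wi N T X A Q1 Qk ψ a xd i ⟨(τ : ℕ) + 1, h1⟩ y)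
        = ∑ x, Wi N T X A Q1 Qk ψ a xd i τ x * ψ i τ a x (a τ i) := by
      rw [Finset.sum_congr rfl fun y (_ : y ∈ Finset.univ) => hrec y, Finset.sum_comm]
      refine Finset.sum_congr rfl fun x _ => ?_
      calc (∑ y, Wi N T X A Q1 Qk ψ a xd i τ x *
              (ψ i τ a x (a τ i) * Qk i ⟨(τ : ℕ) + 1, h1⟩ x (a τ) y))
          = ∑ y, (Wi N T X A Q1 Qk ψ a xd i τ x * ψ i τ a x (a τ i)) *
              Qk i ⟨(τ : ℕ) + 1, h1⟩ x (a τ) y :=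
            Finset.sum_congr rfl fun y _ => by ring
        _ = (Wi N T X A Q1 Qk ψ a xd i τ x * ψ i τ a x (a τ i)) *
              ∑ y, Qk i ⟨(τ : ℕ) + 1, h1⟩ x (a τ) y := (Finset.mul_sum _ _ _).symm
        _ = Wi N T X A Q1 Qk ψ a xd i τ x * ψ i τ a x (a τ i) := by
            rw [(hK.2 i ⟨(τ : ℕ) + 1, h1⟩ x (a τ)).2, mul_one]
    have hDpos : 0 < ∑ x, Wi N T X A Q1 Qk ψ a xd i τ x * ψ i τ a x (a τ i) := by
      rw [← hS'D]
      exact hSpos' i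
    have hSpos_i : 0 < ∑ x, Wi N T X A Q1 Qk ψ a xd i τ x := hSpos i
    have hSne : (∑ x, Wi N T X A Q1 Qk ψ a xd i τ x) ≠ 0 := ne_of_gt hSpos_i
    have hcond : (∑ x, bel N T X A Q1 Qk ψ i τ a x * ψ i τ a x (a τ i))
        = (∑ x, Wi N T X A Q1 Qk ψ a xd i τ x * ψ i τ a x (a τ i)) /
            ∑ x, Wi N T X A Q1 Qk ψ a xd i τ x := by
      rw [Finset.sum_div]
      refine Finset.sum_congr rfl fun x _ => ?_
      rw [bel_eq N T X A Q1 Qk ψ a xd hc hψ hK τ hpos i x]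
      rw [div_mul_eq_mul_div]
    have hnum : (∑ x, bel N T X A Q1 Qk ψ i τ a x * ψ i τ a x (a τ i) *
          Qk i ⟨(τ : ℕ) + 1, h1⟩ x (a τ) xiv)
        = (∑ x, Wi N T X A Q1 Qk ψ a xd i τ x *
            (ψ i τ a x (a τ i) * Qk i ⟨(τ : ℕ) + 1, h1⟩ x (a τ) xiv)) /
            ∑ x, Wi N T X A Q1 Qk ψ a xd i τ x := by
      rw [Finset.sum_div]
      refine Finset.sum_congr rfl fun x _ => ?_
      rw [bel_eq N T X A Q1 Qk ψ a xd hc hψ hK τ hpos i x]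
      rw [div_mul_eq_mul_div, div_mul_eq_mul_div, mul_assoc]
    simp only [Fbar]
    rw [if_pos (by rw [hcond]; exact div_pos hDpos hSpos_i)]
    rw [hnum, hcond]
    rw [bel_eq N T X A Q1 Qk ψ a xd hc hψ hK ⟨(τ : ℕ) + 1, h1⟩ hpos2' i xiv]
    rw [hrec xiv, hS'D]
    field_simp

end DynGame
end
end

section
/- (Belief state is a controlled Markov process.) In the common-agent reformulation of the game, the process (Π_t, Γ_t) with state Π_t (the common-information belief on types) and control Γ_t (the profile of prescriptions) is a controlled Markov process: for any common-agent policy ψ, P^ψ(π_{t+1} ∈ · | π_{1:t}, γ_{1:t}) = Σ_{a_t, x_t} π_t(x_t) ∏_i γ_t^i(a_t^i | x_t^i) · 1{F(π_t, γ_t, a_t) ∈ ·}, which depends only on (π_t, γ_t) and not on the policy ψ or on the earlier (π_{1:t-1}, γ_{1:t-1}). -/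
open scoped Classical BigOperators

noncomputable section

namespace DynGame

variable (N T : ℕ) (X A : Fin N → Type)
  [∀ i, Fintype (X i)] [∀ i, Fintype (A i)]

variable (Q1 : ∀ i, X i → ℝ) (Qk : ∀ i, Fin T → X i → (∀ j, A j) → X i → ℝ)

/-- The vector belief update map `F(π, γ, a)`, componentwise `F̄`; `t'` is the (0-based)
time of the updated belief, so kernels `Qk · t'` are used. -/
def Fupd (t' : Fin T) (π : ∀ j, X j → ℝ) (γ : ∀ j, X j → A j → ℝ) (av : ∀ j, A j) :
    ∀ j, X j → ℝ :=
  fun j => Fbar (fun x x' => Qk j t' x av x') (π j) (fun x => γ j x (av j))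

/-- The vector of marginal beliefs at (0-based) time `τ` given history `a`. -/
def belVec (ψ : CAPolicy N T X A) (τ : Fin T) (a : Fin T → ∀ j, A j) :
    ∀ j, X j → ℝ :=
  fun j => bel N T X A Q1 Qk ψ j τ a


/-! ### Auxiliary development -/

section AuxDev

/-- Sum-out lemma: if two functions on a finite function space have equal sums over any
single coordinate fiber, their total sums agree. -/
lemma sumout {β : Type*} [Fintype β] [Nonempty β] (κ : Fin T) (f g : (Fin T → β) → ℝ)
    (h : ∀ r : Fin T → β,
      ∑ y : β, f (Function.update r κ y) = ∑ y : β, g (Function.update r κ y)) :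
    ∑ r, f r = ∑ r, g r := by
  classical
  let e : (Fin T → β) ≃ β × ({s : Fin T // s ≠ κ} → β) :=
    { toFun := fun r => (r κ, fun s => r s.1),
      invFun := fun p s => if hs : s = κ then p.1 else p.2 ⟨s, hs⟩,
      left_inv := by
        intro r; funext s; by_cases hs : s = κ <;> simp [hs]
      right_inv := by
        intro p
        refine Prod.ext (by simp) ?_
        funext s
        simp [s.2] }
  have key : ∀ F : (Fin T → β) → ℝ, ∑ r, F r =
      ∑ rr : {s : Fin T // s ≠ κ} → β, ∑ y : β, F (e.symm (y, rr)) := by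
    intro F
    rw [← Equiv.sum_comp e.symm F, Fintype.sum_prod_type, Finset.sum_comm]
  rw [key f, key g]
  refine Finset.sum_congr rfl fun rr _ => ?_
  set r0 : Fin T → β := e.symm (Classical.arbitrary β, rr) with hr0
  have hupd : ∀ y : β, e.symm (y, rr) = Function.update r0 κ y := by
    intro y; funext s
    by_cases hs : s = κ
    · subst hs; simp [hr0, e, Function.update_self]
    · simp [hr0, e, Function.update_of_ne hs, hs]
  simp only [hupd]
  exact h r0

end AuxDev

section AuxDev2

variable (ψ : CAPolicy N T X A)

/-- Per-player full trajectory weight. -/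
def pw (i : Fin N) (xi : Fin T → X i) (a' : Fin T → ∀ j, A j) : ℝ :=
  (if h : 0 < T then Q1 i (xi ⟨0, h⟩) else 1) *
  ∏ t : Fin T, (ψ i t a' (xi t) (a' t i) *
    if h : (t : ℕ) + 1 < T then
      Qk i ⟨(t : ℕ) + 1, h⟩ (xi t) (a' t) (xi ⟨(t : ℕ) + 1, h⟩) else 1)

lemma trajP_eq_prod (x : Fin T → ∀ i, X i) (a' : Fin T → ∀ i, A i) :
    trajP N T X A Q1 Qk (caStrat N T X A ψ) x a'
      = ∏ i, pw N T X A Q1 Qk ψ i (fun t => x t i) a' := by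
  unfold trajP caStrat pw
  conv_rhs => rw [Finset.prod_mul_distrib]
  congr 1
  · split <;> simp
  · conv_rhs => rw [Finset.prod_comm]
    refine Finset.prod_congr rfl fun t _ => ?_
    conv_rhs => rw [Finset.prod_mul_distrib]

/-- Per-player truncated weight with uniform dummies: real policy factors for `t < uA`,
real kernel factors for transitions into times `≤ uX`. -/
def pwc (uA uX : ℕ) (i : Fin N) (xi : Fin T → X i) (a' : Fin T → ∀ j, A j) : ℝ :=
  (if h : 0 < T then Q1 i (xi ⟨0, h⟩) else 1) *
  ∏ t : Fin T,
    ((if (t : ℕ) < uA then ψ i t a' (xi t) (a' t i) else (Fintype.card (A i) : ℝ)⁻¹) *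
     if h : (t : ℕ) + 1 < T then
       (if (t : ℕ) + 1 ≤ uX then Qk i ⟨(t : ℕ) + 1, h⟩ (xi t) (a' t) (xi ⟨(t : ℕ) + 1, h⟩)
        else (Fintype.card (X i) : ℝ)⁻¹)
     else 1)

lemma pwc_top (i : Fin N) (xi : Fin T → X i) (a' : Fin T → ∀ j, A j) :
    pwc N T X A Q1 Qk ψ T T i xi a' = pw N T X A Q1 Qk ψ i xi a' := by
  unfold pwc pw
  congr 1
  refine Finset.prod_congr rfl fun t _ => ?_
  rw [if_pos t.isLt]
  congr 1
  split
  · rw [if_pos (by omega)]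
  · rfl

/-- The controlled sum `Z` with cutoffs. -/
def Zc (τ : Fin T) (a : Fin T → ∀ j, A j) (Φ : (∀ j, X j) → (∀ j, A j) → ℝ)
    (uA uX : ℕ) : ℝ :=
  ∑ x : Fin T → ∀ j, X j, ∑ a' : Fin T → ∀ j, A j,
    if ∀ s : Fin T, (s : ℕ) < (τ : ℕ) → a' s = a s then
      (∏ i, pwc N T X A Q1 Qk ψ uA uX i (fun t => x t i) a') * Φ (x τ) (a' τ)
    else 0

end AuxDev2

section AuxDev3

set_option linter.unusedSectionVars false
set_option maxHeartbeats 1000000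

lemma prod_factor' {T : ℕ} (t₀ : Fin T) {F G : Fin T → ℝ} {c : ℝ}
    (h : ∀ t, t ≠ t₀ → F t = G t) (h0 : F t₀ = c * G t₀) :
    ∏ t, F t = c * ∏ t, G t := by
  rw [← Finset.mul_prod_erase Finset.univ F (Finset.mem_univ t₀),
      ← Finset.mul_prod_erase Finset.univ G (Finset.mem_univ t₀), h0,
      Finset.prod_congr rfl (fun t ht => h t (Finset.ne_of_mem_erase ht))]
  ring

lemma fin_ne_mk {n m : ℕ} (t : Fin n) {hm : m < n} (h : (t : ℕ) ≠ m) :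
    t ≠ (⟨m, hm⟩ : Fin n) := fun hh => h (congrArg Fin.val hh)

lemma fin_mk_ne_mk {n a b : ℕ} {ha : a < n} {hb : b < n} (h : a ≠ b) :
    (⟨a, ha⟩ : Fin n) ≠ (⟨b, hb⟩ : Fin n) := fun hh => h (congrArg Fin.val hh)

variable (ψ : CAPolicy N T X A)

lemma pwc_factorX (u : ℕ) (hT : u + 1 < T) (i : Fin N) (hXi : Nonempty (X i))
    (xi : Fin T → X i) (a' : Fin T → ∀ j, A j) :
    pwc N T X A Q1 Qk ψ (u+1) (u+1) i xi a'
      = (Qk i ⟨u+1, hT⟩ (xi ⟨u, by omega⟩) (a' ⟨u, by omega⟩) (xi ⟨u+1, hT⟩)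
          * (Fintype.card (X i) : ℝ)) * pwc N T X A Q1 Qk ψ (u+1) u i xi a' := by
  haveI := hXi
  have hcard : (Fintype.card (X i) : ℝ) ≠ 0 :=
    Nat.cast_ne_zero.mpr Fintype.card_ne_zero
  unfold pwc
  rw [prod_factor' (⟨u, by omega⟩ : Fin T)
    (G := fun t => (if (t : ℕ) < u+1 then ψ i t a' (xi t) (a' t i)
        else (Fintype.card (A i) : ℝ)⁻¹) *
      if h : (t : ℕ) + 1 < T then
        (if (t : ℕ) + 1 ≤ u then Qk i ⟨(t : ℕ) + 1, h⟩ (xi t) (a' t) (xi ⟨(t : ℕ) + 1, h⟩)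
         else (Fintype.card (X i) : ℝ)⁻¹)
      else 1)
    (c := Qk i ⟨u+1, hT⟩ (xi ⟨u, by omega⟩) (a' ⟨u, by omega⟩) (xi ⟨u+1, hT⟩)
          * (Fintype.card (X i) : ℝ))
    ?_ ?_]
  · ring
  · intro t ht
    have htu : (t : ℕ) ≠ u := fun hh => ht (Fin.ext hh)
    congr 1
    by_cases h2 : (t : ℕ) + 1 < T
    · by_cases h3 : (t : ℕ) + 1 ≤ u
      · rw [dif_pos h2, dif_pos h2, if_pos (show (t:ℕ)+1 ≤ u+1 by omega), if_pos h3]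
      · rw [dif_pos h2, dif_pos h2, if_neg (show ¬ (t:ℕ)+1 ≤ u+1 by omega), if_neg h3]
    · rw [dif_neg h2, dif_neg h2]
  · simp only [Fin.val_mk]
    rw [dif_pos hT, dif_pos hT, if_pos (le_refl (u+1)), if_neg (by omega : ¬ u + 1 ≤ u)]
    simp only [if_pos (Nat.lt_succ_self u)]
    field_simp

lemma pwc_updX (u : ℕ) (hT : u + 1 < T) (i : Fin N)
    (xi : Fin T → X i) (y : X i) (a' : Fin T → ∀ j, A j) :
    pwc N T X A Q1 Qk ψ (u+1) u i (Function.update xi ⟨u+1, hT⟩ y) a'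
      = pwc N T X A Q1 Qk ψ (u+1) u i xi a' := by
  unfold pwc
  refine congrArg₂ (· * ·) ?_ (Finset.prod_congr rfl fun t _ => ?_)
  · split
    · rw [Function.update_of_ne (fin_mk_ne_mk (by omega))]
    · rfl
  · refine congrArg₂ (· * ·) ?_ ?_
    · by_cases h1 : (t : ℕ) < u + 1
      · rw [if_pos h1, if_pos h1,
          Function.update_of_ne (fin_ne_mk t (by omega))]
      · rw [if_neg h1, if_neg h1]
    · by_cases h2 : (t : ℕ) + 1 < T
      · by_cases h3 : (t : ℕ) + 1 ≤ u
        · rw [dif_pos h2, dif_pos h2, if_pos h3, if_pos h3,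
            Function.update_of_ne (fin_ne_mk t (by omega)),
            Function.update_of_ne (fin_mk_ne_mk (by omega))]
        · rw [dif_pos h2, dif_pos h2, if_neg h3, if_neg h3]
      · rw [dif_neg h2, dif_neg h2]

end AuxDev3

section AuxDev4

set_option linter.unusedSectionVars false
set_option maxHeartbeats 1000000

lemma mul_card_cancel {x w c : ℝ} (hc : c ≠ 0) : x * w = x * c * (c⁻¹ * w) := by
  rw [mul_assoc, ← mul_assoc c, mul_inv_cancel₀ hc, one_mul]

variable (ψ : CAPolicy N T X A)

lemma pwc_factorA (hc : CACausal N T X A ψ) (u : ℕ) (hT : u < T) (i : Fin N)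
    (hAi : Nonempty (A i)) (xi : Fin T → X i) (a' : Fin T → ∀ j, A j) (b : ∀ j, A j) :
    pwc N T X A Q1 Qk ψ (u+1) u i xi (Function.update a' ⟨u, hT⟩ b)
      = (ψ i ⟨u, hT⟩ a' (xi ⟨u, hT⟩) (b i) * (Fintype.card (A i) : ℝ))
        * pwc N T X A Q1 Qk ψ u u i xi a' := by
  haveI := hAi
  have hcard : (Fintype.card (A i) : ℝ) ≠ 0 :=
    Nat.cast_ne_zero.mpr Fintype.card_ne_zero
  have hcaus : ∀ (t : Fin T), (t : ℕ) ≤ u →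
      ψ i t (Function.update a' ⟨u, hT⟩ b) (xi t) = ψ i t a' (xi t) := by
    intro t htu
    exact hc i t _ a' (xi t) fun s hs =>
      (Function.update_of_ne (fin_ne_mk s (by omega)) _ _)
  unfold pwc
  rw [prod_factor' (⟨u, hT⟩ : Fin T)
    (G := fun t => (if (t : ℕ) < u then ψ i t a' (xi t) (a' t i)
        else (Fintype.card (A i) : ℝ)⁻¹) *
      if h : (t : ℕ) + 1 < T then
        (if (t : ℕ) + 1 ≤ u then Qk i ⟨(t : ℕ) + 1, h⟩ (xi t) (a' t) (xi ⟨(t : ℕ) + 1, h⟩)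
         else (Fintype.card (X i) : ℝ)⁻¹)
      else 1)
    (c := ψ i ⟨u, hT⟩ a' (xi ⟨u, hT⟩) (b i) * (Fintype.card (A i) : ℝ))
    ?_ ?_]
  · ring
  · intro t ht
    have htu : (t : ℕ) ≠ u := fun hh => ht (Fin.ext hh)
    refine congrArg₂ (· * ·) ?_ ?_
    · by_cases h1 : (t : ℕ) < u + 1
      · rw [if_pos h1, if_pos (show (t : ℕ) < u by omega),
          Function.update_of_ne (fin_ne_mk t (by omega)), hcaus t (by omega)]
      · rw [if_neg h1, if_neg (show ¬ (t : ℕ) < u by omega)]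
    · by_cases h2 : (t : ℕ) + 1 < T
      · by_cases h3 : (t : ℕ) + 1 ≤ u
        · rw [dif_pos h2, dif_pos h2, if_pos h3, if_pos h3,
            Function.update_of_ne (fin_ne_mk t (by omega))]
        · rw [dif_pos h2, dif_pos h2, if_neg h3, if_neg h3]
      · rw [dif_neg h2, dif_neg h2]
  · simp only [Fin.val_mk]
    rw [if_neg (lt_irrefl u), Function.update_self]
    rw [show (ψ i ⟨u, hT⟩ (Function.update a' ⟨u, hT⟩ b) (xi ⟨u, hT⟩))
        = ψ i ⟨u, hT⟩ a' (xi ⟨u, hT⟩) from hcaus ⟨u, hT⟩ (le_refl u)]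
    simp only [if_pos (Nat.lt_succ_self u)]
    by_cases hST : u + 1 < T
    · rw [dif_pos hST, dif_pos hST, if_neg (by omega : ¬ u + 1 ≤ u),
        if_neg (by omega : ¬ u + 1 ≤ u)]
      exact mul_card_cancel hcard
    · rw [dif_neg hST, dif_neg hST]
      exact mul_card_cancel hcard

lemma pwc_updA (hc : CACausal N T X A ψ) (u : ℕ) (hT : u < T) (i : Fin N)
    (xi : Fin T → X i) (a' : Fin T → ∀ j, A j) (b : ∀ j, A j) :
    pwc N T X A Q1 Qk ψ u u i xi (Function.update a' ⟨u, hT⟩ b)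
      = pwc N T X A Q1 Qk ψ u u i xi a' := by
  have hcaus : ∀ (t : Fin T), (t : ℕ) ≤ u →
      ψ i t (Function.update a' ⟨u, hT⟩ b) (xi t) = ψ i t a' (xi t) := by
    intro t htu
    exact hc i t _ a' (xi t) fun s hs =>
      (Function.update_of_ne (fin_ne_mk s (by omega)) _ _)
  unfold pwc
  refine congrArg₂ (· * ·) rfl (Finset.prod_congr rfl fun t _ => ?_)
  refine congrArg₂ (· * ·) ?_ ?_
  · by_cases h1 : (t : ℕ) < u
    · rw [if_pos h1, if_pos h1, Function.update_of_ne (fin_ne_mk t (by omega)),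
        hcaus t (by omega)]
    · rw [if_neg h1, if_neg h1]
  · by_cases h2 : (t : ℕ) + 1 < T
    · by_cases h3 : (t : ℕ) + 1 ≤ u
      · rw [dif_pos h2, dif_pos h2, if_pos h3, if_pos h3,
          Function.update_of_ne (fin_ne_mk t (by omega))]
      · rw [dif_pos h2, dif_pos h2, if_neg h3, if_neg h3]
    · rw [dif_neg h2, dif_neg h2]

lemma pwc_highX (uA u : ℕ) (h : T ≤ u + 1) (i : Fin N)
    (xi : Fin T → X i) (a' : Fin T → ∀ j, A j) :
    pwc N T X A Q1 Qk ψ uA (u+1) i xi a' = pwc N T X A Q1 Qk ψ uA u i xi a' := by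
  unfold pwc
  refine congrArg₂ (· * ·) rfl (Finset.prod_congr rfl fun t _ => ?_)
  refine congrArg₂ (· * ·) rfl ?_
  by_cases h2 : (t : ℕ) + 1 < T
  · rw [dif_pos h2, dif_pos h2, if_pos (by omega), if_pos (by omega)]
  · rw [dif_neg h2, dif_neg h2]

lemma pwc_highA (u uX : ℕ) (h : T ≤ u) (i : Fin N)
    (xi : Fin T → X i) (a' : Fin T → ∀ j, A j) :
    pwc N T X A Q1 Qk ψ (u+1) uX i xi a' = pwc N T X A Q1 Qk ψ u uX i xi a' := by
  unfold pwc
  refine congrArg₂ (· * ·) rfl (Finset.prod_congr rfl fun t _ => ?_)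
  refine congrArg₂ (· * ·) ?_ rfl
  rw [if_pos (by omega : (t:ℕ) < u + 1), if_pos (by omega : (t:ℕ) < u)]

end AuxDev4

section AuxDev5

set_option linter.unusedSectionVars false
set_option maxHeartbeats 2000000

variable (ψ : CAPolicy N T X A)

lemma stepX (hK : StochKer N T X A Q1 Qk) (hX : ∀ i, Nonempty (X i))
    (τ : Fin T) (a : Fin T → ∀ j, A j) (Φ : (∀ j, X j) → (∀ j, A j) → ℝ)
    (u : ℕ) (hu : (τ : ℕ) ≤ u) :
    Zc N T X A Q1 Qk ψ τ a Φ (u+1) (u+1) = Zc N T X A Q1 Qk ψ τ a Φ (u+1) u := by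
  by_cases hT : u + 1 < T
  · haveI : Nonempty (∀ j, X j) := ⟨fun j => (hX j).some⟩
    unfold Zc
    refine sumout T ⟨u+1, hT⟩ _ _ fun r => ?_
    conv_lhs => rw [Finset.sum_comm]
    conv_rhs => rw [Finset.sum_comm]
    refine Finset.sum_congr rfl fun a' _ => ?_
    by_cases hC : ∀ s : Fin T, (s : ℕ) < (τ : ℕ) → a' s = a s
    · simp only [if_pos hC]
      have hupdτ : ∀ y : ∀ j, X j, Function.update r ⟨u+1, hT⟩ y τ = r τ := fun y =>
        Function.update_of_ne (fin_ne_mk τ (by omega)) _ _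
      have hxi : ∀ (y : ∀ j, X j) (i : Fin N),
          (fun t => Function.update r ⟨u+1, hT⟩ y t i)
            = Function.update (fun t => r t i) ⟨u+1, hT⟩ (y i) := by
        intro y i; funext t
        by_cases ht : t = (⟨u+1, hT⟩ : Fin T)
        · subst ht; rw [Function.update_self, Function.update_self]
        · rw [Function.update_of_ne ht, Function.update_of_ne ht]
      have key : ∀ (y : ∀ j, X j) (i : Fin N),
          pwc N T X A Q1 Qk ψ (u+1) (u+1) i (fun t => Function.update r ⟨u+1, hT⟩ y t i) a'
          = (Qk i ⟨u+1, hT⟩ (r ⟨u, by omega⟩ i) (a' ⟨u, by omega⟩) (y i)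
              * (Fintype.card (X i) : ℝ))
            * pwc N T X A Q1 Qk ψ (u+1) u i (fun t => r t i) a' := by
        intro y i
        rw [hxi y i, pwc_factorX N T X A Q1 Qk ψ u hT i (hX i) _ a',
          pwc_updX N T X A Q1 Qk ψ u hT i _ _ a',
          Function.update_self, Function.update_of_ne (fin_mk_ne_mk (by omega))]
      have key2 : ∀ (y : ∀ j, X j) (i : Fin N),
          pwc N T X A Q1 Qk ψ (u+1) u i (fun t => Function.update r ⟨u+1, hT⟩ y t i) a'
          = pwc N T X A Q1 Qk ψ (u+1) u i (fun t => r t i) a' := by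
        intro y i; rw [hxi y i, pwc_updX N T X A Q1 Qk ψ u hT i _ _ a']
      simp only [key, key2, hupdτ]
      rw [Finset.sum_const, Finset.card_univ]
      simp only [Finset.prod_mul_distrib, mul_assoc]
      rw [← Finset.sum_mul]
      have hsum : (∑ y : ∀ j, X j, ∏ i,
          Qk i ⟨u+1, hT⟩ (r ⟨u, by omega⟩ i) (a' ⟨u, by omega⟩) (y i)) = 1 := by
        rw [← Fintype.piFinset_univ, ← Finset.prod_univ_sum]
        exact Finset.prod_eq_one fun i _ => (hK.2 i _ _ _).2
      rw [hsum, one_mul, nsmul_eq_mul, Fintype.card_pi, Nat.cast_prod]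
    · simp only [if_neg hC]
  · unfold Zc
    refine Finset.sum_congr rfl fun x _ => Finset.sum_congr rfl fun a' _ => ?_
    have hq : ∀ i, pwc N T X A Q1 Qk ψ (u+1) (u+1) i (fun t => x t i) a'
        = pwc N T X A Q1 Qk ψ (u+1) u i (fun t => x t i) a' := fun i =>
      pwc_highX N T X A Q1 Qk ψ (u+1) u (by omega) i _ a'
    simp only [hq]

lemma stepA (hψ : CAStochastic N T X A ψ) (hc : CACausal N T X A ψ)
    (hA : ∀ i, Nonempty (A i))
    (τ : Fin T) (a : Fin T → ∀ j, A j) (Φ : (∀ j, X j) → (∀ j, A j) → ℝ)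
    (u : ℕ) (hu : (τ : ℕ) + 1 ≤ u) :
    Zc N T X A Q1 Qk ψ τ a Φ (u+1) u = Zc N T X A Q1 Qk ψ τ a Φ u u := by
  by_cases hT : u < T
  · haveI : Nonempty (∀ j, A j) := ⟨fun j => (hA j).some⟩
    unfold Zc
    refine Finset.sum_congr rfl fun x _ => ?_
    refine sumout T ⟨u, hT⟩ _ _ fun r => ?_
    have hCiff : ∀ b : ∀ j, A j,
        (∀ s : Fin T, (s : ℕ) < (τ : ℕ) → Function.update r ⟨u, hT⟩ b s = a s)
          ↔ (∀ s : Fin T, (s : ℕ) < (τ : ℕ) → r s = a s) := by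
      intro b
      constructor
      · intro h s hs
        rw [← Function.update_of_ne (fin_ne_mk (m := u) s (by omega)) b r]
        exact h s hs
      · intro h s hs
        rw [Function.update_of_ne (fin_ne_mk (m := u) s (by omega)) b r]
        exact h s hs
    have hif : ∀ (b : ∀ j, A j) (v : ℝ),
        (if ∀ s : Fin T, (s : ℕ) < (τ : ℕ) → Function.update r ⟨u, hT⟩ b s = a s
          then v else 0)
          = if ∀ s : Fin T, (s : ℕ) < (τ : ℕ) → r s = a s then v else 0 := fun b v =>
      if_congr (hCiff b) rfl rfl
    by_cases hC : ∀ s : Fin T, (s : ℕ) < (τ : ℕ) → r s = a s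
    · have hupdτ : ∀ b : ∀ j, A j, Function.update r ⟨u, hT⟩ b τ = r τ := fun b =>
        Function.update_of_ne (fin_ne_mk τ (by omega)) _ _
      have key : ∀ (b : ∀ j, A j) (i : Fin N),
          pwc N T X A Q1 Qk ψ (u+1) u i (fun t => x t i) (Function.update r ⟨u, hT⟩ b)
          = (ψ i ⟨u, hT⟩ r (x ⟨u, hT⟩ i) (b i) * (Fintype.card (A i) : ℝ))
            * pwc N T X A Q1 Qk ψ u u i (fun t => x t i) r := fun b i =>
        pwc_factorA N T X A Q1 Qk ψ hc u hT i (hA i) _ r b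
      have key2 : ∀ (b : ∀ j, A j) (i : Fin N),
          pwc N T X A Q1 Qk ψ u u i (fun t => x t i) (Function.update r ⟨u, hT⟩ b)
          = pwc N T X A Q1 Qk ψ u u i (fun t => x t i) r := fun b i =>
        pwc_updA N T X A Q1 Qk ψ hc u hT i _ r b
      simp only [key, key2, hupdτ, hif, if_pos hC]
      rw [Finset.sum_const, Finset.card_univ]
      simp only [Finset.prod_mul_distrib, mul_assoc]
      rw [← Finset.sum_mul]
      have hsum : (∑ b : ∀ j, A j, ∏ i, ψ i ⟨u, hT⟩ r (x ⟨u, hT⟩ i) (b i)) = 1 := by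
        rw [← Fintype.piFinset_univ, ← Finset.prod_univ_sum]
        exact Finset.prod_eq_one fun i _ => (hψ i _ r _).2
      rw [hsum, one_mul, nsmul_eq_mul, Fintype.card_pi, Nat.cast_prod]
    · simp only [hif, if_neg hC]
  · unfold Zc
    refine Finset.sum_congr rfl fun x _ => Finset.sum_congr rfl fun a' _ => ?_
    have hq : ∀ i, pwc N T X A Q1 Qk ψ (u+1) u i (fun t => x t i) a'
        = pwc N T X A Q1 Qk ψ u u i (fun t => x t i) a' := fun i =>
      pwc_highA N T X A Q1 Qk ψ u u (by omega) i _ a'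
    simp only [hq]

lemma Zdown (hK : StochKer N T X A Q1 Qk) (hψ : CAStochastic N T X A ψ)
    (hc : CACausal N T X A ψ) (hX : ∀ i, Nonempty (X i)) (hA : ∀ i, Nonempty (A i))
    (τ : Fin T) (a : Fin T → ∀ j, A j) (Φ : (∀ j, X j) → (∀ j, A j) → ℝ)
    (u : ℕ) (hu : (τ : ℕ) + 1 ≤ u) :
    Zc N T X A Q1 Qk ψ τ a Φ u u
      = Zc N T X A Q1 Qk ψ τ a Φ ((τ : ℕ)+1) ((τ : ℕ)+1) := by
  induction u, hu using Nat.le_induction with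
  | base => rfl
  | succ u hu ih =>
    rw [stepX N T X A Q1 Qk ψ hK hX τ a Φ u (by omega),
      stepA N T X A Q1 Qk ψ hψ hc hA τ a Φ u hu, ih]

end AuxDev5

section AuxDev6

set_option linter.unusedSectionVars false
set_option maxHeartbeats 2000000

variable (ψ : CAPolicy N T X A)

/-- Per-player prefix weight along the fixed public history `a`. -/
def pv (τ : Fin T) (a : Fin T → ∀ j, A j) (i : Fin N) (xi : Fin T → X i) : ℝ :=
  (if h : 0 < T then Q1 i (xi ⟨0, h⟩) else 1) *
  ∏ t : Fin T,
    ((if (t : ℕ) < (τ : ℕ) then ψ i t a (xi t) (a t i) else 1) *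
     if h : (t : ℕ) + 1 < T then
       (if (t : ℕ) + 1 ≤ (τ : ℕ) then Qk i ⟨(t : ℕ) + 1, h⟩ (xi t) (a t) (xi ⟨(t : ℕ) + 1, h⟩)
        else (Fintype.card (X i) : ℝ)⁻¹)
     else 1)

lemma pwc_tau (hc : CACausal N T X A ψ) (τ : Fin T) (a : Fin T → ∀ j, A j) (i : Fin N)
    (xi : Fin T → X i) (a' : Fin T → ∀ j, A j)
    (hC : ∀ s : Fin T, (s : ℕ) < (τ : ℕ) → a' s = a s) :
    pwc N T X A Q1 Qk ψ ((τ : ℕ)+1) (τ : ℕ) i xi a'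
      = pv N T X A Q1 Qk ψ τ a i xi * ψ i τ a (xi τ) (a' τ i)
        * ∏ t : Fin T, (if (τ : ℕ) < (t : ℕ) then (Fintype.card (A i) : ℝ)⁻¹ else 1) := by
  unfold pwc pv
  have main : (∏ t : Fin T,
      ((if (t : ℕ) < (τ : ℕ) + 1 then ψ i t a' (xi t) (a' t i)
          else (Fintype.card (A i) : ℝ)⁻¹) *
       if h : (t : ℕ) + 1 < T then
         (if (t : ℕ) + 1 ≤ (τ : ℕ) then Qk i ⟨(t : ℕ) + 1, h⟩ (xi t) (a' t) (xi ⟨(t : ℕ) + 1, h⟩)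
          else (Fintype.card (X i) : ℝ)⁻¹)
       else 1))
      = ∏ t : Fin T,
        (((if (t : ℕ) < (τ : ℕ) then ψ i t a (xi t) (a t i) else 1) *
          if h : (t : ℕ) + 1 < T then
            (if (t : ℕ) + 1 ≤ (τ : ℕ) then Qk i ⟨(t : ℕ) + 1, h⟩ (xi t) (a t) (xi ⟨(t : ℕ) + 1, h⟩)
             else (Fintype.card (X i) : ℝ)⁻¹)
          else 1) *
         ((if (τ : ℕ) < (t : ℕ) then (Fintype.card (A i) : ℝ)⁻¹ else 1) *
          (if t = τ then ψ i τ a (xi τ) (a' τ i) else 1))) := by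
    refine Finset.prod_congr rfl fun t _ => ?_
    rcases lt_trichotomy ((t : ℕ)) ((τ : ℕ)) with h1 | h1 | h1
    · have ht : t ≠ τ := fun hh => by omega
      have hx : ∀ (v : A i), ψ i t a' (xi t) v = ψ i t a (xi t) v := by
        intro v
        exact congrFun (hc i t a' a (xi t) fun s hs => hC s (by omega)) v
      rw [if_pos (by omega : (t : ℕ) < (τ : ℕ) + 1), if_pos h1,
        if_neg (by omega : ¬ (τ : ℕ) < (t : ℕ)), if_neg ht, hC t h1, hx]
      ring
    · have ht : t = τ := Fin.ext h1
      subst ht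
      have hx : ψ i t a' (xi t) = ψ i t a (xi t) :=
        hc i t a' a (xi t) fun s hs => hC s (by omega)
      rw [if_pos (by omega : (t : ℕ) < (t : ℕ) + 1), if_neg (lt_irrefl ((t : ℕ))),
        if_neg (lt_irrefl ((t : ℕ))), if_pos rfl, hx]
      by_cases h2 : (t : ℕ) + 1 < T
      · rw [dif_pos h2, dif_pos h2, if_neg (by omega : ¬ (t : ℕ) + 1 ≤ (t : ℕ)),
          if_neg (by omega : ¬ (t : ℕ) + 1 ≤ (t : ℕ))]
        ring
      · rw [dif_neg h2, dif_neg h2]; ring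
    · have ht : t ≠ τ := fun hh => by omega
      rw [if_neg (by omega : ¬ (t : ℕ) < (τ : ℕ) + 1), if_neg (by omega : ¬ (t : ℕ) < (τ : ℕ)),
        if_pos h1, if_neg ht]
      by_cases h2 : (t : ℕ) + 1 < T
      · rw [dif_pos h2, dif_pos h2, if_neg (by omega : ¬ (t : ℕ) + 1 ≤ (τ : ℕ)),
          if_neg (by omega : ¬ (t : ℕ) + 1 ≤ (τ : ℕ))]
        ring
      · rw [dif_neg h2, dif_neg h2]; ring
  rw [main]
  simp only [Finset.prod_mul_distrib]
  rw [Finset.prod_ite_eq' Finset.univ τ (fun _ => ψ i τ a (xi τ) (a' τ i))]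
  simp only [Finset.mem_univ, if_pos]
  ring

end AuxDev6

section AuxDev7

set_option linter.unusedSectionVars false
set_option maxHeartbeats 2000000

lemma acollapse (hA : Nonempty (∀ j, A j)) (τ : Fin T) (a : Fin T → ∀ j, A j)
    (K : (∀ j, A j) → ℝ) :
    (∑ a' : Fin T → ∀ j, A j,
        if ∀ s : Fin T, (s : ℕ) < (τ : ℕ) → a' s = a s then K (a' τ) else 0)
      = (∏ t : Fin T, if (τ : ℕ) < (t : ℕ) then (Fintype.card (∀ j, A j) : ℝ) else 1)
        * ∑ av, K av := by
  haveI := hA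
  have main : ∀ u : ℕ, (τ : ℕ) + 1 ≤ u →
      (∑ a' : Fin T → ∀ j, A j,
        if (∀ s : Fin T, (s : ℕ) < (τ : ℕ) → a' s = a s)
            ∧ (∀ s : Fin T, u ≤ (s : ℕ) → a' s = a s) then K (a' τ) else 0)
      = (∏ t : Fin T, if (τ : ℕ) < (t : ℕ) ∧ (t : ℕ) < u
            then (Fintype.card (∀ j, A j) : ℝ) else 1) * ∑ av, K av := by
    intro u hu
    induction u, hu using Nat.le_induction with
    | base =>
      rw [Finset.prod_eq_one fun t _ => if_neg (by omega), one_mul]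
      have h1 : ∀ a' : Fin T → ∀ j, A j,
          (if (∀ s : Fin T, (s : ℕ) < (τ : ℕ) → a' s = a s)
              ∧ (∀ s : Fin T, (τ : ℕ) + 1 ≤ (s : ℕ) → a' s = a s) then K (a' τ) else 0)
          = ∑ av, if a' = Function.update a τ av then K av else 0 := by
        intro a'
        by_cases hD : (∀ s : Fin T, (s : ℕ) < (τ : ℕ) → a' s = a s)
            ∧ (∀ s : Fin T, (τ : ℕ) + 1 ≤ (s : ℕ) → a' s = a s)
        · have hiff : ∀ av, (a' = Function.update a τ av) ↔ (av = a' τ) := by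
            intro av
            constructor
            · intro h; rw [h, Function.update_self]
            · intro h
              subst h
              funext s
              by_cases hs : s = τ
              · subst hs; rw [Function.update_self]
              · have hsv : (s : ℕ) ≠ (τ : ℕ) := fun hh => hs (Fin.ext hh)
                rw [Function.update_of_ne hs]
                rcases lt_or_ge ((s : ℕ)) ((τ : ℕ)) with h2 | h2
                · exact hD.1 s h2
                · exact hD.2 s (by omega)
          rw [if_pos hD]
          simp only [hiff]
          rw [Finset.sum_ite_eq' Finset.univ (a' τ) K]
          simp
        · rw [if_neg hD]
          symm
          apply Finset.sum_eq_zero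
          intro av _
          rw [if_neg]
          intro hh
          apply hD
          subst hh
          constructor
          · intro s hs
            rw [Function.update_of_ne (fun hh2 => by subst hh2; omega)]
          · intro s hs
            rw [Function.update_of_ne (fun hh2 => by subst hh2; omega)]
      rw [Finset.sum_congr rfl fun a' _ => h1 a', Finset.sum_comm]
      refine Finset.sum_congr rfl fun av _ => ?_
      rw [Finset.sum_ite_eq' Finset.univ (Function.update a τ av) (fun _ => K av)]
      simp
    | succ u hu ih =>
      by_cases hT : u < T
      · have hpow : (∏ t : Fin T, if (τ : ℕ) < (t : ℕ) ∧ (t : ℕ) < u + 1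
              then (Fintype.card (∀ j, A j) : ℝ) else 1)
            = (Fintype.card (∀ j, A j) : ℝ)
              * ∏ t : Fin T, if (τ : ℕ) < (t : ℕ) ∧ (t : ℕ) < u
                  then (Fintype.card (∀ j, A j) : ℝ) else 1 := by
          refine prod_factor' (⟨u, hT⟩ : Fin T) (fun t ht => ?_) ?_
          · have : (t : ℕ) ≠ u := fun hh => ht (Fin.ext hh)
            by_cases h2 : (τ : ℕ) < (t : ℕ) ∧ (t : ℕ) < u
            · rw [if_pos h2, if_pos ⟨h2.1, by omega⟩]
            · rw [if_neg h2, if_neg (fun hh => h2 ⟨hh.1, by omega⟩)]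
          · simp only [Fin.val_mk]
            rw [if_pos ⟨by omega, by omega⟩, if_neg (by omega), mul_one]
        rw [hpow, mul_assoc, ← ih, Finset.mul_sum]
        refine sumout T ⟨u, hT⟩ _ _ fun r => ?_
        have hiff1 : ∀ b : ∀ j, A j,
            ((∀ s : Fin T, (s : ℕ) < (τ : ℕ) → Function.update r ⟨u, hT⟩ b s = a s)
              ∧ (∀ s : Fin T, u + 1 ≤ (s : ℕ) → Function.update r ⟨u, hT⟩ b s = a s))
            ↔ ((∀ s : Fin T, (s : ℕ) < (τ : ℕ) → r s = a s)
              ∧ (∀ s : Fin T, u + 1 ≤ (s : ℕ) → r s = a s)) := by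
          intro b
          have h3 : ∀ s : Fin T, (s : ℕ) ≠ u →
              Function.update r ⟨u, hT⟩ b s = r s := fun s hs =>
            Function.update_of_ne (fin_ne_mk (m := u) s hs) _ _
          constructor
          · exact fun h => ⟨fun s hs => by rw [← h3 s (by omega)]; exact h.1 s hs,
              fun s hs => by rw [← h3 s (by omega)]; exact h.2 s hs⟩
          · exact fun h => ⟨fun s hs => by rw [h3 s (by omega)]; exact h.1 s hs,
              fun s hs => by rw [h3 s (by omega)]; exact h.2 s hs⟩
        have hiff2 : ∀ b : ∀ j, A j,
            ((∀ s : Fin T, (s : ℕ) < (τ : ℕ) → Function.update r ⟨u, hT⟩ b s = a s)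
              ∧ (∀ s : Fin T, u ≤ (s : ℕ) → Function.update r ⟨u, hT⟩ b s = a s))
            ↔ (((∀ s : Fin T, (s : ℕ) < (τ : ℕ) → r s = a s)
              ∧ (∀ s : Fin T, u + 1 ≤ (s : ℕ) → r s = a s)) ∧ b = a ⟨u, hT⟩) := by
          intro b
          have h3 : ∀ s : Fin T, (s : ℕ) ≠ u →
              Function.update r ⟨u, hT⟩ b s = r s := fun s hs =>
            Function.update_of_ne (fin_ne_mk (m := u) s hs) _ _
          constructor
          · intro h
            refine ⟨⟨fun s hs => by rw [← h3 s (by omega)]; exact h.1 s hs,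
              fun s hs => by rw [← h3 s (by omega)]; exact h.2 s (by omega)⟩, ?_⟩
            have := h.2 ⟨u, hT⟩ (by simp)
            rwa [Function.update_self] at this
          · intro h
            refine ⟨fun s hs => by rw [h3 s (by omega)]; exact h.1.1 s hs, fun s hs => ?_⟩
            by_cases hsu : (s : ℕ) = u
            · have : s = (⟨u, hT⟩ : Fin T) := Fin.ext hsu
              rw [this, Function.update_self, h.2]
            · rw [h3 s hsu]
              exact h.1.2 s (by omega)
        have hKτ : ∀ b : ∀ j, A j, Function.update r ⟨u, hT⟩ b τ = r τ := fun b =>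
          Function.update_of_ne (fin_ne_mk (m := u) τ (by omega)) _ _
        calc (∑ b : ∀ j, A j,
                if (∀ s : Fin T, (s : ℕ) < (τ : ℕ) → Function.update r ⟨u, hT⟩ b s = a s)
                    ∧ (∀ s : Fin T, u + 1 ≤ (s : ℕ) → Function.update r ⟨u, hT⟩ b s = a s)
                then K (Function.update r ⟨u, hT⟩ b τ) else 0)
            = ∑ b : ∀ j, A j,
                if (∀ s : Fin T, (s : ℕ) < (τ : ℕ) → r s = a s)
                    ∧ (∀ s : Fin T, u + 1 ≤ (s : ℕ) → r s = a s)
                then K (r τ) else 0 := by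
              refine Finset.sum_congr rfl fun b _ => ?_
              rw [hKτ b, if_congr (hiff1 b) rfl rfl]
          _ = (Fintype.card (∀ j, A j) : ℝ) *
                (if (∀ s : Fin T, (s : ℕ) < (τ : ℕ) → r s = a s)
                    ∧ (∀ s : Fin T, u + 1 ≤ (s : ℕ) → r s = a s)
                 then K (r τ) else 0) := by
              rw [Finset.sum_const, Finset.card_univ, nsmul_eq_mul]
          _ = ∑ b : ∀ j, A j, (Fintype.card (∀ j, A j) : ℝ) *
                (if (∀ s : Fin T, (s : ℕ) < (τ : ℕ) → Function.update r ⟨u, hT⟩ b s = a s)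
                    ∧ (∀ s : Fin T, u ≤ (s : ℕ) → Function.update r ⟨u, hT⟩ b s = a s)
                 then K (Function.update r ⟨u, hT⟩ b τ) else 0) := by
              have : ∀ b : ∀ j, A j,
                  (if (∀ s : Fin T, (s : ℕ) < (τ : ℕ) → Function.update r ⟨u, hT⟩ b s = a s)
                      ∧ (∀ s : Fin T, u ≤ (s : ℕ) → Function.update r ⟨u, hT⟩ b s = a s)
                   then K (Function.update r ⟨u, hT⟩ b τ) else 0)
                  = if b = a ⟨u, hT⟩ then
                      (if (∀ s : Fin T, (s : ℕ) < (τ : ℕ) → r s = a s)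
                          ∧ (∀ s : Fin T, u + 1 ≤ (s : ℕ) → r s = a s)
                       then K (r τ) else 0) else 0 := by
                intro b
                rw [hKτ b, if_congr (hiff2 b) rfl rfl]
                by_cases hb : b = a ⟨u, hT⟩
                · by_cases hP : (∀ s : Fin T, (s : ℕ) < (τ : ℕ) → r s = a s)
                      ∧ (∀ s : Fin T, u + 1 ≤ (s : ℕ) → r s = a s)
                  · rw [if_pos ⟨hP, hb⟩, if_pos hb, if_pos hP]
                  · rw [if_neg (fun hh => hP hh.1), if_pos hb, if_neg hP]
                · rw [if_neg (fun hh => hb hh.2), if_neg hb]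
              simp only [this]
              rw [← Finset.mul_sum, Finset.sum_ite_eq' Finset.univ (a ⟨u, hT⟩)
                (fun _ => if (∀ s : Fin T, (s : ℕ) < (τ : ℕ) → r s = a s)
                    ∧ (∀ s : Fin T, u + 1 ≤ (s : ℕ) → r s = a s) then K (r τ) else 0)]
              simp
      · have hiffc : ∀ a' : Fin T → ∀ j, A j,
            ((∀ s : Fin T, (s : ℕ) < (τ : ℕ) → a' s = a s)
              ∧ (∀ s : Fin T, u + 1 ≤ (s : ℕ) → a' s = a s))
            ↔ ((∀ s : Fin T, (s : ℕ) < (τ : ℕ) → a' s = a s)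
              ∧ (∀ s : Fin T, u ≤ (s : ℕ) → a' s = a s)) := by
          intro a'
          constructor
          · exact fun h => ⟨h.1, fun s hs => absurd s.isLt (by omega)⟩
          · exact fun h => ⟨h.1, fun s hs => absurd s.isLt (by omega)⟩
        have hpow2 : ∀ t : Fin T, ((τ : ℕ) < (t : ℕ) ∧ (t : ℕ) < u + 1)
            ↔ ((τ : ℕ) < (t : ℕ) ∧ (t : ℕ) < u) := by
          intro t
          have := t.isLt
          constructor
          · exact fun h => ⟨h.1, by omega⟩
          · exact fun h => ⟨h.1, by omega⟩
        rw [Finset.sum_congr rfl fun (a' : Fin T → ∀ j, A j) _ => if_congr (hiffc a') rfl rfl,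
          Finset.prod_congr rfl fun (t : Fin T) _ => if_congr (hpow2 t) rfl rfl, ih]
  have hτT := τ.isLt
  have e1 : ∀ a' : Fin T → ∀ j, A j,
      (∀ s : Fin T, (s : ℕ) < (τ : ℕ) → a' s = a s)
        ↔ ((∀ s : Fin T, (s : ℕ) < (τ : ℕ) → a' s = a s)
            ∧ (∀ s : Fin T, T ≤ (s : ℕ) → a' s = a s)) := fun a' =>
    ⟨fun h => ⟨h, fun s hs => absurd s.isLt (by omega)⟩, fun h => h.1⟩
  have e2 : ∀ t : Fin T, ((τ : ℕ) < (t : ℕ)) ↔ ((τ : ℕ) < (t : ℕ) ∧ (t : ℕ) < T) :=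
    fun t => ⟨fun h => ⟨h, t.isLt⟩, fun h => h.1⟩
  rw [Finset.sum_congr rfl fun (a' : Fin T → ∀ j, A j) _ => if_congr (e1 a') rfl rfl,
    main T (by omega),
    Finset.prod_congr rfl fun (t : Fin T) _ => if_congr (e2 t) rfl rfl]

end AuxDev7

section AuxDev8

set_option linter.unusedSectionVars false
set_option maxHeartbeats 2000000

lemma prod_ite_zero {n : ℕ} (P : Fin n → Prop) [DecidablePred P] (f : Fin n → ℝ) :
    (∏ j, if P j then f j else 0) = if (∀ j, P j) then ∏ j, f j else 0 := by
  by_cases h : ∀ j, P j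
  · rw [if_pos h]; exact Finset.prod_congr rfl fun j _ => if_pos (h j)
  · rw [if_neg h]
    obtain ⟨j, hj⟩ := not_forall.mp h
    exact Finset.prod_eq_zero (Finset.mem_univ j) (if_neg hj)

variable (ψ : CAPolicy N T X A)

/-- Per-player prefix marginal of the type at time `τ` jointly with the history. -/
def pfn (τ : Fin T) (a : Fin T → ∀ j, A j) (i : Fin N) (y : X i) : ℝ :=
  ∑ xi : Fin T → X i, if xi τ = y then pv N T X A Q1 Qk ψ τ a i xi else 0

lemma prodsum (τ : Fin T) (a : Fin T → ∀ j, A j) (H : (∀ j, X j) → ℝ) :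
    (∑ x : Fin T → ∀ j, X j, (∏ j, pv N T X A Q1 Qk ψ τ a j (fun t => x t j)) * H (x τ))
      = ∑ xv : ∀ j, X j, (∏ j, pfn N T X A Q1 Qk ψ τ a j (xv j)) * H xv := by
  have h1 : ∀ xv : ∀ j, X j, (∏ j, pfn N T X A Q1 Qk ψ τ a j (xv j))
      = ∑ g : ∀ j, Fin T → X j,
          ∏ j, (if g j τ = xv j then pv N T X A Q1 Qk ψ τ a j (g j) else 0) := by
    intro xv
    unfold pfn
    rw [Finset.prod_univ_sum, Fintype.piFinset_univ]
  have h2 : ∀ (g : ∀ j, Fin T → X j) (xv : ∀ j, X j),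
      (∏ j, if g j τ = xv j then pv N T X A Q1 Qk ψ τ a j (g j) else 0)
        = if xv = (fun j => g j τ) then ∏ j, pv N T X A Q1 Qk ψ τ a j (g j) else 0 := by
    intro g xv
    rw [prod_ite_zero]
    exact if_congr ⟨fun h => funext fun j => (h j).symm, fun h j => (congrFun h j).symm⟩
      rfl rfl
  calc (∑ x : Fin T → ∀ j, X j,
          (∏ j, pv N T X A Q1 Qk ψ τ a j (fun t => x t j)) * H (x τ))
      = ∑ g : ∀ j, Fin T → X j,
          (∏ j, pv N T X A Q1 Qk ψ τ a j (g j)) * H (fun j => g j τ) := by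
        exact Fintype.sum_equiv (Equiv.piComm fun (t : Fin T) (j : Fin N) => X j)
          _ _ (fun x => rfl)
    _ = ∑ g : ∀ j, Fin T → X j, ∑ xv : ∀ j, X j,
          (if xv = (fun j => g j τ) then ∏ j, pv N T X A Q1 Qk ψ τ a j (g j) else 0)
            * H xv := by
        refine Finset.sum_congr rfl fun g _ => ?_
        rw [Finset.sum_congr rfl (fun xv (_ : xv ∈ Finset.univ) => by rw [ite_mul, zero_mul]),
          Finset.sum_ite_eq' Finset.univ (fun j => g j τ)
            (fun xv => (∏ j, pv N T X A Q1 Qk ψ τ a j (g j)) * H xv)]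
        simp
    _ = ∑ xv : ∀ j, X j, ∑ g : ∀ j, Fin T → X j,
          (if xv = (fun j => g j τ) then ∏ j, pv N T X A Q1 Qk ψ τ a j (g j) else 0)
            * H xv := Finset.sum_comm
    _ = ∑ xv : ∀ j, X j, (∏ j, pfn N T X A Q1 Qk ψ τ a j (xv j)) * H xv := by
        refine Finset.sum_congr rfl fun xv _ => ?_
        rw [h1, Finset.sum_mul]
        exact Finset.sum_congr rfl fun g _ => by rw [h2]

lemma master (hK : StochKer N T X A Q1 Qk) (hψ : CAStochastic N T X A ψ)
    (hc : CACausal N T X A ψ) (hX : ∀ i, Nonempty (X i)) (hA : ∀ i, Nonempty (A i))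
    (τ : Fin T) (a : Fin T → ∀ j, A j) (Φ : (∀ j, X j) → (∀ j, A j) → ℝ) :
    (∑ x : Fin T → ∀ j, X j, ∑ a' : Fin T → ∀ j, A j,
      if ∀ s : Fin T, (s : ℕ) < (τ : ℕ) → a' s = a s
      then trajP N T X A Q1 Qk (caStrat N T X A ψ) x a' * Φ (x τ) (a' τ) else 0)
    = ∑ av : ∀ j, A j, ∑ xv : ∀ j, X j,
        (∏ j, pfn N T X A Q1 Qk ψ τ a j (xv j))
          * ((∏ j, ψ j τ a (xv j) (av j)) * Φ xv av) := by
  have hτT := τ.isLt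
  have step1 : (∑ x : Fin T → ∀ j, X j, ∑ a' : Fin T → ∀ j, A j,
      if ∀ s : Fin T, (s : ℕ) < (τ : ℕ) → a' s = a s
      then trajP N T X A Q1 Qk (caStrat N T X A ψ) x a' * Φ (x τ) (a' τ) else 0)
      = Zc N T X A Q1 Qk ψ τ a Φ T T := by
    refine Finset.sum_congr rfl fun x _ => Finset.sum_congr rfl fun a' _ => ?_
    rw [trajP_eq_prod N T X A Q1 Qk ψ x a',
      Finset.prod_congr rfl fun i (_ : i ∈ Finset.univ) =>
        (pwc_top N T X A Q1 Qk ψ i (fun t => x t i) a').symm]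
  rw [step1,
    Zdown N T X A Q1 Qk ψ hK hψ hc hX hA τ a Φ T (by omega),
    stepX N T X A Q1 Qk ψ hK hX τ a Φ (τ : ℕ) (le_refl _)]
  unfold Zc
  have hκ : (∏ t : Fin T, if (τ : ℕ) < (t : ℕ) then (Fintype.card (∀ j, A j) : ℝ) else 1)
      * (∏ i, ∏ t : Fin T, if (τ : ℕ) < (t : ℕ) then (Fintype.card (A i) : ℝ)⁻¹ else 1)
      = 1 := by
    rw [Finset.prod_comm, ← Finset.prod_mul_distrib]
    refine Finset.prod_eq_one fun t _ => ?_
    by_cases h : (τ : ℕ) < (t : ℕ)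
    · rw [if_pos h, Finset.prod_congr rfl fun i (_ : i ∈ Finset.univ) => if_pos h,
        Fintype.card_pi, Nat.cast_prod, ← Finset.prod_mul_distrib]
      refine Finset.prod_eq_one fun i _ => ?_
      haveI := hA i
      exact mul_inv_cancel₀ (Nat.cast_ne_zero.mpr Fintype.card_ne_zero)
    · rw [if_neg h, one_mul]
      exact Finset.prod_eq_one fun i _ => if_neg h
  have hx' : ∀ x : Fin T → ∀ j, X j,
      (∑ a' : Fin T → ∀ j, A j,
        if ∀ s : Fin T, (s : ℕ) < (τ : ℕ) → a' s = a s
        then (∏ i, pwc N T X A Q1 Qk ψ ((τ : ℕ)+1) (τ : ℕ) i (fun t => x t i) a')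
              * Φ (x τ) (a' τ) else 0)
      = ∑ av : ∀ j, A j, (∏ j, pv N T X A Q1 Qk ψ τ a j (fun t => x t j))
          * ((∏ i, ψ i τ a (x τ i) (av i)) * Φ (x τ) av) := by
    intro x
    have hsum2 : ∀ a' : Fin T → ∀ j, A j,
        (if ∀ s : Fin T, (s : ℕ) < (τ : ℕ) → a' s = a s
          then (∏ i, pwc N T X A Q1 Qk ψ ((τ : ℕ)+1) (τ : ℕ) i (fun t => x t i) a')
                * Φ (x τ) (a' τ) else 0)
        = if ∀ s : Fin T, (s : ℕ) < (τ : ℕ) → a' s = a s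
          then (fun av => (∏ i, ∏ t : Fin T,
              if (τ : ℕ) < (t : ℕ) then (Fintype.card (A i) : ℝ)⁻¹ else 1)
            * ((∏ j, pv N T X A Q1 Qk ψ τ a j (fun t => x t j))
              * ((∏ i, ψ i τ a (x τ i) (av i)) * Φ (x τ) av))) (a' τ) else 0 := by
      intro a'
      by_cases hC : ∀ s : Fin T, (s : ℕ) < (τ : ℕ) → a' s = a s
      · rw [if_pos hC, if_pos hC,
          Finset.prod_congr rfl fun i (_ : i ∈ Finset.univ) =>
            pwc_tau N T X A Q1 Qk ψ hc τ a i (fun t => x t i) a' hC]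
        simp only [Finset.prod_mul_distrib]
        ring
      · rw [if_neg hC, if_neg hC]
    rw [Finset.sum_congr rfl fun a' _ => hsum2 a',
      acollapse N T A ⟨fun j => (hA j).some⟩ τ a
        (fun av => (∏ i, ∏ t : Fin T,
            if (τ : ℕ) < (t : ℕ) then (Fintype.card (A i) : ℝ)⁻¹ else 1)
          * ((∏ j, pv N T X A Q1 Qk ψ τ a j (fun t => x t j))
            * ((∏ i, ψ i τ a (x τ i) (av i)) * Φ (x τ) av))), Finset.mul_sum]
    exact Finset.sum_congr rfl fun av _ => by rw [← mul_assoc, hκ, one_mul]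
  rw [Finset.sum_congr rfl fun x _ => hx' x, Finset.sum_comm]
  exact Finset.sum_congr rfl fun av _ =>
    prodsum N T X A Q1 Qk ψ τ a (fun xv => (∏ i, ψ i τ a (xv i) (av i)) * Φ xv av)

end AuxDev8

section AuxDev9

set_option linter.unusedSectionVars false
set_option maxHeartbeats 2000000

lemma ite_and_mul_one {p q : Prop} [Decidable p] [Decidable q] (v : ℝ) :
    (if p ∧ q then v else 0) = if p then v * (if q then 1 else 0) else 0 := by
  by_cases hp : p <;> by_cases hq : q <;> simp [hp, hq]

variable (ψ : CAPolicy N T X A)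

lemma pfn_nonneg (hK : StochKer N T X A Q1 Qk) (hψ : CAStochastic N T X A ψ)
    (τ : Fin T) (a : Fin T → ∀ j, A j) (i : Fin N) (y : X i) :
    0 ≤ pfn N T X A Q1 Qk ψ τ a i y := by
  refine Finset.sum_nonneg fun xi _ => ?_
  split
  · unfold pv
    refine mul_nonneg ?_ (Finset.prod_nonneg fun t _ => mul_nonneg ?_ ?_)
    · split
      · exact (hK.1 i).1 _
      · exact zero_le_one
    · split
      · exact (hψ i _ a _).1 _
      · exact zero_le_one
    · split
      · split
        · exact (hK.2 i _ _ _).1 _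
        · exact inv_nonneg.mpr (Nat.cast_nonneg _)
      · exact zero_le_one
  · exact le_refl 0

lemma sum_prod_psi_eq_one (hψ : CAStochastic N T X A ψ) (τ : Fin T)
    (a : Fin T → ∀ j, A j) (xv : ∀ j, X j) :
    (∑ av : ∀ j, A j, ∏ j, ψ j τ a (xv j) (av j)) = 1 := by
  rw [← Fintype.piFinset_univ, ← Finset.prod_univ_sum]
  exact Finset.prod_eq_one fun j _ => (hψ j τ a _).2

end AuxDev9

/-- the belief state is a controlled Markov process: conditionally on the
public history `a_{1:t-1}` (which determines the past beliefs `π_{1:t}` and prescriptions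
`γ_{1:t}`), the probability that the next belief takes the value `π'` equals
`∑_{a_t, x_t} π_t(x_t) ∏_i γ_t^i(a_t^i|x_t^i) 1{F(π_t, γ_t, a_t) = π'}`, a function of
`(π_t, γ_t)` alone. -/
theorem belief_controlled_markov
    (ψ : CAPolicy N T X A)
    (hK : StochKer N T X A Q1 Qk)
    (hψ : CAStochastic N T X A ψ) (hc : CACausal N T X A ψ)
    (τ : Fin T) (h1 : (τ : ℕ) + 1 < T) (a : Fin T → ∀ j, A j)
    (hpos : 0 < aMarg N T X A Q1 Qk (caStrat N T X A ψ) ((τ : ℕ) + 1) a) :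
    ∀ π' : ∀ j, X j → ℝ,
      (∑ x' : Fin T → ∀ j, X j, ∑ a' : Fin T → ∀ j, A j,
        if (∀ s : Fin T, (s : ℕ) < (τ : ℕ) → a' s = a s) ∧
           Fupd N T X A Qk ⟨(τ : ℕ) + 1, h1⟩ (belVec N T X A Q1 Qk ψ τ a)
             (fun j => ψ j τ a) (a' τ) = π'
        then trajP N T X A Q1 Qk (caStrat N T X A ψ) x' a' else 0) /
      aMarg N T X A Q1 Qk (caStrat N T X A ψ) ((τ : ℕ) + 1) a
        = ∑ av : ∀ j, A j, ∑ xv : ∀ j, X j,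
            (∏ j, belVec N T X A Q1 Qk ψ τ a j (xv j)) *
            (∏ j, ψ j τ a (xv j) (av j)) *
            (if Fupd N T X A Qk ⟨(τ : ℕ) + 1, h1⟩ (belVec N T X A Q1 Qk ψ τ a)
                 (fun j => ψ j τ a) av = π' then 1 else 0) := by
  have hXne' : Nonempty (∀ j, X j) := by
    by_contra h
    rw [not_nonempty_iff] at h
    haveI : IsEmpty (Fin T → ∀ j, X j) := ⟨fun f => h.false (f τ)⟩
    unfold aMarg at hpos
    rw [Finset.univ_eq_empty, Finset.sum_empty] at hpos
    exact lt_irrefl 0 hpos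
  have hXi : ∀ i, Nonempty (X i) := fun i => ⟨hXne'.some i⟩
  have hAi : ∀ i, Nonempty (A i) := fun i => by
    by_contra h
    rw [not_nonempty_iff] at h
    have h2 := (hψ i τ a (hXi i).some).2
    rw [Finset.univ_eq_empty, Finset.sum_empty] at h2
    exact zero_ne_one h2
  have hcond : ∀ (a' : Fin T → ∀ j, A j),
      (∀ s : Fin T, (s : ℕ) + 1 < (τ : ℕ) + 1 → a' s = a s)
        ↔ (∀ s : Fin T, (s : ℕ) < (τ : ℕ) → a' s = a s) := fun a' =>
    ⟨fun h s hs => h s (by omega), fun h s hs => h s (by omega)⟩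
  -- (1) the denominator factorizes
  have haMarg : aMarg N T X A Q1 Qk (caStrat N T X A ψ) ((τ : ℕ) + 1) a
      = ∏ j, ∑ y, pfn N T X A Q1 Qk ψ τ a j y := by
    unfold aMarg
    refine ((Finset.sum_congr rfl fun x' _ => Finset.sum_congr rfl fun a' _ =>
        (if_congr (hcond a') (mul_one _).symm rfl)).trans
      ((master N T X A Q1 Qk ψ hK hψ hc hXi hAi τ a (fun _ _ => (1 : ℝ))).trans ?_))
    rw [Finset.sum_comm]
    have e2 : ∀ xv : ∀ j, X j,
        (∑ av : ∀ j, A j, (∏ j, pfn N T X A Q1 Qk ψ τ a j (xv j))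
          * ((∏ j, ψ j τ a (xv j) (av j)) * 1))
        = ∏ j, pfn N T X A Q1 Qk ψ τ a j (xv j) := by
      intro xv
      simp only [mul_one]
      rw [← Finset.mul_sum, sum_prod_psi_eq_one N T X A ψ hψ τ a xv, mul_one]
    rw [Finset.sum_congr rfl fun xv _ => e2 xv, Finset.prod_univ_sum,
      Fintype.piFinset_univ]
  -- (2) positivity
  have hpfn : ∀ (j : Fin N) (y : X j), 0 ≤ pfn N T X A Q1 Qk ψ τ a j y := fun j y =>
    pfn_nonneg N T X A Q1 Qk ψ hK hψ τ a j y
  have hm : ∀ j : Fin N, 0 ≤ ∑ y, pfn N T X A Q1 Qk ψ τ a j y := fun j =>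
    Finset.sum_nonneg fun y _ => hpfn j y
  have hprodpos : 0 < ∏ j, ∑ y, pfn N T X A Q1 Qk ψ τ a j y := haMarg ▸ hpos
  have hmne : ∀ j : Fin N, (∑ y, pfn N T X A Q1 Qk ψ τ a j y) ≠ 0 := by
    intro j h0
    rw [Finset.prod_eq_zero (Finset.mem_univ j) h0] at hprodpos
    exact lt_irrefl 0 hprodpos
  -- (3) beliefs in terms of pfn
  have hbel : ∀ (j : Fin N) (y : X j), bel N T X A Q1 Qk ψ j τ a y
      = pfn N T X A Q1 Qk ψ τ a j y / (∑ z, pfn N T X A Q1 Qk ψ τ a j z) := by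
    intro j y
    unfold bel
    have e1 : ∀ (x' : Fin T → ∀ j, X j) (a' : Fin T → ∀ j, A j),
        (if (∀ s : Fin T, (s : ℕ) < (τ : ℕ) → a' s = a s) ∧ x' τ j = y
          then trajP N T X A Q1 Qk (caStrat N T X A ψ) x' a' else 0)
        = if (∀ s : Fin T, (s : ℕ) < (τ : ℕ) → a' s = a s)
          then trajP N T X A Q1 Qk (caStrat N T X A ψ) x' a'
            * (if x' τ j = y then (1 : ℝ) else 0) else 0 := fun x' a' =>
      ite_and_mul_one _
    have hnum : (∑ x' : Fin T → ∀ j, X j, ∑ a' : Fin T → ∀ j, A j,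
        if (∀ s : Fin T, (s : ℕ) < (τ : ℕ) → a' s = a s) ∧ x' τ j = y
        then trajP N T X A Q1 Qk (caStrat N T X A ψ) x' a' else 0)
        = pfn N T X A Q1 Qk ψ τ a j y
          * ∏ i ∈ Finset.univ.erase j, ∑ z, pfn N T X A Q1 Qk ψ τ a i z := by
      refine ((Finset.sum_congr rfl fun x' _ => Finset.sum_congr rfl fun a' _ =>
          e1 x' a').trans
        ((master N T X A Q1 Qk ψ hK hψ hc hXi hAi τ a
          (fun xv _ => if xv j = y then (1 : ℝ) else 0)).trans ?_))
      rw [Finset.sum_comm]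
      have e3 : ∀ xv : ∀ j, X j,
          (∑ av : ∀ j, A j, (∏ i, pfn N T X A Q1 Qk ψ τ a i (xv i))
            * ((∏ i, ψ i τ a (xv i) (av i)) * (if xv j = y then (1 : ℝ) else 0)))
          = ∏ i, Function.update (fun (i : Fin N) (z : X i) => pfn N T X A Q1 Qk ψ τ a i z)
              j (fun z => if z = y then pfn N T X A Q1 Qk ψ τ a j z else 0) i (xv i) := by
        intro xv
        have step : (∑ av : ∀ j, A j, (∏ i, pfn N T X A Q1 Qk ψ τ a i (xv i))
            * ((∏ i, ψ i τ a (xv i) (av i)) * (if xv j = y then (1 : ℝ) else 0)))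
            = (∏ i, pfn N T X A Q1 Qk ψ τ a i (xv i)) * (if xv j = y then (1 : ℝ) else 0) := by
          have e4 : ∀ av : ∀ j, A j, (∏ i, pfn N T X A Q1 Qk ψ τ a i (xv i))
              * ((∏ i, ψ i τ a (xv i) (av i)) * (if xv j = y then (1 : ℝ) else 0))
              = ((∏ i, pfn N T X A Q1 Qk ψ τ a i (xv i))
                  * (if xv j = y then (1 : ℝ) else 0)) * (∏ i, ψ i τ a (xv i) (av i)) :=
            fun av => by ring
          rw [Finset.sum_congr rfl fun av _ => e4 av,
            ← Finset.mul_sum, sum_prod_psi_eq_one N T X A ψ hψ τ a xv, mul_one]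
        rw [step]
        by_cases hxy : xv j = y
        · rw [if_pos hxy, mul_one]
          refine Finset.prod_congr rfl fun i _ => ?_
          by_cases hij : i = j
          · subst hij
            rw [Function.update_self, if_pos hxy]
          · rw [Function.update_of_ne hij]
        · rw [if_neg hxy, mul_zero]
          symm
          refine Finset.prod_eq_zero (Finset.mem_univ j) ?_
          rw [Function.update_self, if_neg hxy]
      have collapse : (∑ xv : ∀ j, X j, ∏ i,
          Function.update (fun (i : Fin N) (z : X i) => pfn N T X A Q1 Qk ψ τ a i z)
            j (fun z => if z = y then pfn N T X A Q1 Qk ψ τ a j z else 0) i (xv i))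
          = ∏ i, ∑ z, Function.update (fun (i : Fin N) (z : X i) => pfn N T X A Q1 Qk ψ τ a i z)
            j (fun z => if z = y then pfn N T X A Q1 Qk ψ τ a j z else 0) i z := by
        rw [Finset.prod_univ_sum, Fintype.piFinset_univ]
      rw [Finset.sum_congr rfl fun xv _ => e3 xv, collapse,
        ← Finset.mul_prod_erase Finset.univ _ (Finset.mem_univ j)]
      refine congrArg₂ (· * ·) ?_ (Finset.prod_congr rfl fun i hi => ?_)
      · simp only [Function.update_self]
        rw [Finset.sum_ite_eq' Finset.univ y (pfn N T X A Q1 Qk ψ τ a j)]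
        simp
      · simp only [Function.update_of_ne (Finset.ne_of_mem_erase hi)]
    rw [hnum, haMarg,
      ← Finset.mul_prod_erase Finset.univ _ (Finset.mem_univ j),
      mul_div_mul_right _ _
        (Finset.prod_ne_zero_iff.mpr fun i _ => hmne i)]
  intro π'
  -- abbreviate the update map
  have hnum : (∑ x' : Fin T → ∀ j, X j, ∑ a' : Fin T → ∀ j, A j,
      if (∀ s : Fin T, (s : ℕ) < (τ : ℕ) → a' s = a s) ∧
         Fupd N T X A Qk ⟨(τ : ℕ) + 1, h1⟩ (belVec N T X A Q1 Qk ψ τ a)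
           (fun j => ψ j τ a) (a' τ) = π'
      then trajP N T X A Q1 Qk (caStrat N T X A ψ) x' a' else 0)
      = ∑ av : ∀ j, A j,
          (∏ j, ∑ z, pfn N T X A Q1 Qk ψ τ a j z * ψ j τ a z (av j))
          * (if Fupd N T X A Qk ⟨(τ : ℕ) + 1, h1⟩ (belVec N T X A Q1 Qk ψ τ a)
               (fun j => ψ j τ a) av = π' then 1 else 0) := by
    refine ((Finset.sum_congr rfl fun x' _ => Finset.sum_congr rfl fun a' _ =>
        ite_and_mul_one _).trans
      ((master N T X A Q1 Qk ψ hK hψ hc hXi hAi τ a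
        (fun _ av => if Fupd N T X A Qk ⟨(τ : ℕ) + 1, h1⟩ (belVec N T X A Q1 Qk ψ τ a)
          (fun j => ψ j τ a) av = π' then (1 : ℝ) else 0)).trans ?_))
    refine Finset.sum_congr rfl fun av _ => ?_
    rw [Finset.sum_congr rfl fun (xv : ∀ j, X j) (_ : xv ∈ Finset.univ) =>
        (by rw [Finset.prod_mul_distrib]; ring :
          (∏ j, pfn N T X A Q1 Qk ψ τ a j (xv j))
            * ((∏ j, ψ j τ a (xv j) (av j))
              * (if Fupd N T X A Qk ⟨(τ : ℕ) + 1, h1⟩ (belVec N T X A Q1 Qk ψ τ a)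
                  (fun j => ψ j τ a) av = π' then (1 : ℝ) else 0))
          = (∏ j, pfn N T X A Q1 Qk ψ τ a j (xv j) * ψ j τ a (xv j) (av j))
            * (if Fupd N T X A Qk ⟨(τ : ℕ) + 1, h1⟩ (belVec N T X A Q1 Qk ψ τ a)
                (fun j => ψ j τ a) av = π' then (1 : ℝ) else 0)),
      ← Finset.sum_mul, Finset.prod_univ_sum, Fintype.piFinset_univ]
  rw [hnum, haMarg, Finset.sum_div]
  refine Finset.sum_congr rfl fun av _ => ?_
  have hrhs : (∑ xv : ∀ j, X j,
      (∏ j, belVec N T X A Q1 Qk ψ τ a j (xv j)) * (∏ j, ψ j τ a (xv j) (av j))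
        * (if Fupd N T X A Qk ⟨(τ : ℕ) + 1, h1⟩ (belVec N T X A Q1 Qk ψ τ a)
            (fun j => ψ j τ a) av = π' then 1 else 0))
      = ((∏ j, ∑ z, pfn N T X A Q1 Qk ψ τ a j z * ψ j τ a z (av j))
          / (∏ j, ∑ z, pfn N T X A Q1 Qk ψ τ a j z))
        * (if Fupd N T X A Qk ⟨(τ : ℕ) + 1, h1⟩ (belVec N T X A Q1 Qk ψ τ a)
            (fun j => ψ j τ a) av = π' then 1 else 0) := by
    have ebel : ∀ (j : Fin N) (z : X j), belVec N T X A Q1 Qk ψ τ a j z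
        = pfn N T X A Q1 Qk ψ τ a j z / (∑ w, pfn N T X A Q1 Qk ψ τ a j w) :=
      fun j z => hbel j z
    rw [Finset.sum_congr rfl fun (xv : ∀ j, X j) (_ : xv ∈ Finset.univ) => (by
        rw [Finset.prod_congr rfl fun j (_ : j ∈ Finset.univ) => ebel j (xv j),
          Finset.prod_div_distrib, Finset.prod_mul_distrib]
        ring :
      (∏ j, belVec N T X A Q1 Qk ψ τ a j (xv j)) * (∏ j, ψ j τ a (xv j) (av j))
        * (if Fupd N T X A Qk ⟨(τ : ℕ) + 1, h1⟩ (belVec N T X A Q1 Qk ψ τ a)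
            (fun j => ψ j τ a) av = π' then 1 else 0)
      = ((∏ j, pfn N T X A Q1 Qk ψ τ a j (xv j) * ψ j τ a (xv j) (av j))
          / (∏ j, ∑ z, pfn N T X A Q1 Qk ψ τ a j z))
        * (if Fupd N T X A Qk ⟨(τ : ℕ) + 1, h1⟩ (belVec N T X A Q1 Qk ψ τ a)
            (fun j => ψ j τ a) av = π' then 1 else 0)),
      ← Finset.sum_mul, ← Finset.sum_div]
    have hnum2 : (∑ xv : ∀ j, X j, ∏ j, pfn N T X A Q1 Qk ψ τ a j (xv j)
        * ψ j τ a (xv j) (av j))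
        = ∏ j, ∑ z, pfn N T X A Q1 Qk ψ τ a j z * ψ j τ a z (av j) := by
      rw [Finset.prod_univ_sum, Fintype.piFinset_univ]
    rw [hnum2]
  rw [hrhs, mul_div_right_comm]

end DynGame
end
end

section
/- (Backward-forward construction yields a PBE.) Suppose for each t and each product belief π_t the fixed-point equation defining θ_t[π_t] has a solution: there exists γ̃_t such that for every player i and type x_t^i, γ̃_t^i(· | x_t^i) maximizes, over distributions γ_t^i(· | x_t^i) on A^i, the expectation E^{γ_t^i(·|x_t^i) γ̃_t^{-i}, π_t}[ R^i(X_t, A_t) + V_{t+1}^i(F(π_t, γ̃_t, A_t), X_{t+1}^i) | x_t^i ], with V defined by backward recursion from V_{T+1}^i ≡ 0. Define beliefs μ*_t and strategies β*_t by the forward recursion μ*_1 = ∏_i Q_1^i, β*_t^i(·|a_{1:t-1}, x_t^i) = θ_t^i[μ*_t[a_{1:t-1}]](·|x_t^i), μ*_{t+1}^i[a_{1:t}] = F̄(μ*_t^i[a_{1:t-1}], θ_t^i[μ*_t[a_{1:t-1}]], a_t). Then (β*, μ*) is a perfect Bayesian equilibrium: for every i, t, public history a_{1:t-1}, private history x_{1:t}^i,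 and alternative strategy β^i, E^{β*_{t:T} , μ*_t[a_{1:t-1}]}[ Σ_{n=t}^T R^i(X_n, A_n) | a_{1:t-1}, x_{1:t}^i ] ≥ E^{β^i_{t:T} β*^{-i}_{t:T}, μ*_t[a_{1:t-1}]}[ Σ_{n=t}^T R^i(X_n, A_n) | a_{1:t-1}, x_{1:t}^i ]. -/
open scoped Classical BigOperators
open Finset

noncomputable section

namespace SPBE

variable (N T : ℕ) (X A : Fin N → Type)
  [∀ i, Fintype (X i)] [∀ i, Fintype (A i)]
  [∀ i, Nonempty (X i)] [∀ i, Nonempty (A i)]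
  (Q1 : ∀ i, X i → ℝ)
  (Qk : ℕ → ∀ i, X i → (∀ j, A j) → X i → ℝ)
  (R : ∀ _ : Fin N, (∀ j, X j) → (∀ j, A j) → ℝ)
  (θ : ℕ → (∀ j, X j → ℝ) → ∀ j, X j → A j → ℝ)

/-- `π` is a vector of marginal beliefs (a product belief). -/
def IsBelief (π : ∀ j, X j → ℝ) : Prop :=
  ∀ j, (∀ x, 0 ≤ π j x) ∧ (∑ x, π j x) = 1

def KerStoch : Prop :=
  (∀ i, (∀ x, 0 ≤ Q1 i x) ∧ (∑ x, Q1 i x) = 1) ∧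
  (∀ t i x a, (∀ x', 0 ≤ Qk t i x a x') ∧ (∑ x', Qk t i x a x') = 1)

/-- The equilibrium generating function produces prescriptions that are probability
distributions at every (product) belief. -/
def ThetaStoch : Prop :=
  ∀ t π, IsBelief N X π → ∀ j x, (∀ b, 0 ≤ θ t π j x b) ∧ (∑ b, θ t π j x b) = 1

/-- One-player Bayes update `F̄` (kernel `Qk t'` is used for the belief at time `t'`). -/
def Fbar (t' : ℕ) (i : Fin N) (πi : X i → ℝ) (γrow : X i → ℝ) (av : ∀ j, A j) :
    X i → ℝ :=
  fun x' =>
    if 0 < ∑ x, πi x * γrow x then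
      (∑ x, πi x * γrow x * Qk t' i x av x') / (∑ x, πi x * γrow x)
    else ∑ x, πi x * Qk t' i x av x'

/-- Vector Bayes update `F(π, γ, a)` producing the belief at time `t'`. -/
def Fupd (t' : ℕ) (π : ∀ j, X j → ℝ) (γ : ∀ j, X j → A j → ℝ) (av : ∀ j, A j) :
    ∀ j, X j → ℝ :=
  fun j => Fbar N X A Qk t' j (π j) (fun x => γ j x (av j)) av

/-- The backward-recursive value functions `V_t^i(π, x^i)` associated with the
equilibrium generating function `θ` (periods are 0-based, `V_T ≡ 0`). -/
def V : ℕ → (∀ j, X j → ℝ) → ∀ i, X i → ℝ :=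
  fun t π i xi =>
    if h : t < T then
      ∑ x : ∀ j, X j, ∑ a : ∀ j, A j, ∑ xi' : X i,
        (if x i = xi then ∏ j ∈ univ.erase i, π j (x j) else 0) *
        (∏ j, θ t π j (x j) (a j)) *
        Qk (t + 1) i xi a xi' *
        (R i x a + V (t + 1) (Fupd N X A Qk (t + 1) π (θ t π) a) i xi')
    else 0
  termination_by t => T - t
  decreasing_by omega

/-- The stage objective of player `i` with own (possibly deviating) mixed action row `p`,
the others playing `θ_t[π]`, and the continuation evaluated through `V_{t+1}` with the
belief updated by the *equilibrium* prescriptions `θ_t[π]`. -/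
def Obj (t : ℕ) (π : ∀ j, X j → ℝ) (i : Fin N) (xi : X i) (p : A i → ℝ) : ℝ :=
  ∑ x : ∀ j, X j, ∑ a : ∀ j, A j, ∑ xi' : X i,
    (if x i = xi then ∏ j ∈ univ.erase i, π j (x j) else 0) *
    (p (a i) * ∏ j ∈ univ.erase i, θ t π j (x j) (a j)) *
    Qk (t + 1) i xi a xi' *
    (R i x a + V N T X A Qk R θ (t + 1) (Fupd N X A Qk (t + 1) π (θ t π) a) i xi')

/-- The fixed point property defining the equilibrium generating function `θ`:
at every period and every product belief, each player's prescription row maximizes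
the stage objective against the others' prescriptions. -/
def FixedPoint : Prop :=
  ∀ t, t < T → ∀ π, IsBelief N X π → ∀ (i : Fin N) (xi : X i) (p : A i → ℝ),
    (∀ b, 0 ≤ p b) → (∑ b, p b) = 1 →
    Obj N T X A Qk R θ t π i xi p ≤ Obj N T X A Qk R θ t π i xi (θ t π i xi)

/-- The forward belief recursion `μ*`: `μ*_0 = ∏ Q_1^i` and
`μ*_{t+1}[a_{1:t}] = F(μ*_t[a_{1:t-1}], θ_t[μ*_t], a_t)`. -/
def μstar : ℕ → (ℕ → ∀ j, A j) → ∀ j, X j → ℝ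
  | 0, _ => fun j => Q1 j
  | (t + 1), a =>
      Fupd N X A Qk (t + 1) (μstar t a) (θ t (μstar t a)) (a t)

/-- Update a history function at one time point. -/
def upd {α : Type*} (h : ℕ → α) (t : ℕ) (v : α) : ℕ → α :=
  fun s => if s = t then v else h s

/-- The expected continuation reward of player `i` from period `t` on, given the public
history `ah`, its own type history `xh`, the current joint type `xcur` (with
`xcur i = xh t`), when player `i` uses the history-based strategy `βi` and all other
players use the equilibrium strategies `β*` (i.e. `θ` applied to the forward beliefs). -/
def cont (i : Fin N)
    (βi : ℕ → (ℕ → ∀ j, A j) → (ℕ → X i) → A i → ℝ) :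
    ℕ → (ℕ → ∀ j, A j) → (ℕ → X i) → (∀ j, X j) → ℝ :=
  fun t ah xh xcur =>
    if h : t < T then
      ∑ a : ∀ j, A j, ∑ x' : ∀ j, X j,
        (βi t ah xh (a i) *
          ∏ j ∈ univ.erase i, θ t (μstar N X A Q1 Qk θ t ah) j (xcur j) (a j)) *
        (∏ j, Qk (t + 1) j (xcur j) a (x' j)) *
        (R i xcur a + cont i βi (t + 1) (upd ah t a) (upd xh (t + 1) (x' i)) x')
    else 0
  termination_by t => T - t
  decreasing_by omega

/-- The conditional expectation `E^{β^i β*^{-i}, μ}[ Σ_{n=t}^T R^i | a_{1:t-1}, x_{1:t}^i ]`: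
the current types of the other players are drawn from the belief `μ^{-i}` and the game
evolves forward by the kernels and strategies. -/
def contVal (i : Fin N)
    (βi : ℕ → (ℕ → ∀ j, A j) → (ℕ → X i) → A i → ℝ)
    (t : ℕ) (ah : ℕ → ∀ j, A j) (xh : ℕ → X i) (μ : ∀ j, X j → ℝ) : ℝ :=
  ∑ xcur : ∀ j, X j,
    (if xcur i = xh t then ∏ j ∈ univ.erase i, μ j (xcur j) else 0) *
    cont N T X A Q1 Qk R θ i βi t ah xh xcur

/-- Player `i`'s equilibrium strategy `β*^i`, as a history-based strategy. -/
def βeq (i : Fin N) : ℕ → (ℕ → ∀ j, A j) → (ℕ → X i) → A i → ℝ :=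
  fun t ah xh ai => θ t (μstar N X A Q1 Qk θ t ah) i (xh t) ai


/-! ### Auxiliary lemmas -/

lemma sum_prod_pi (h : ∀ j, X j → ℝ) :
    ∑ x : ∀ j, X j, ∏ j, h j (x j) = ∏ j, ∑ y, h j y :=
  (Fintype.prod_sum h).symm

lemma prod_update_split (G : ∀ j, X j → ℝ) (i : Fin N) (gi : X i → ℝ) (x : ∀ j, X j) :
    ∏ j, Function.update G i gi j (x j)
      = gi (x i) * ∏ j ∈ univ.erase i, G j (x j) := by
  rw [← Finset.mul_prod_erase univ _ (mem_univ i), Function.update_self]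
  congr 1
  exact Finset.prod_congr rfl fun j hj => by
    rw [Function.update_of_ne (Finset.ne_of_mem_erase hj)]

lemma sum_pi_split (i : Fin N) (gi : X i → ℝ) (G : ∀ j, X j → ℝ) :
    ∑ x : ∀ j, X j, gi (x i) * ∏ j ∈ univ.erase i, G j (x j)
      = (∑ y, gi y) * ∏ j ∈ univ.erase i, ∑ y, G j y := by
  rw [Finset.sum_congr rfl fun (x : ∀ j, X j) _ => (prod_update_split N X G i gi x).symm,
    sum_prod_pi, ← Finset.mul_prod_erase univ _ (mem_univ i), Function.update_self]
  congr 1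
  exact Finset.prod_congr rfl fun j hj => by
    rw [Function.update_of_ne (Finset.ne_of_mem_erase hj)]

lemma fbar_mul (t' : ℕ) (i : Fin N) (πi γrow : X i → ℝ)
    (hπ : ∀ x, 0 ≤ πi x) (hγ : ∀ x, 0 ≤ γrow x) (av : ∀ j, A j) (x' : X i) :
    ∑ x, πi x * γrow x * Qk t' i x av x'
      = (∑ x, πi x * γrow x) * Fbar N X A Qk t' i πi γrow av x' := by
  unfold Fbar
  by_cases hpos : 0 < ∑ x, πi x * γrow x
  · rw [if_pos hpos, mul_comm, div_mul_cancel₀ _ (ne_of_gt hpos)]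
  · have hnn : ∀ x ∈ (univ : Finset (X i)), 0 ≤ πi x * γrow x :=
      fun x _ => mul_nonneg (hπ x) (hγ x)
    have hN : (∑ x, πi x * γrow x) = 0 :=
      le_antisymm (not_lt.mp hpos) (Finset.sum_nonneg hnn)
    have hz := (Finset.sum_eq_zero_iff_of_nonneg hnn).mp hN
    rw [if_neg hpos, hN, zero_mul]
    exact Finset.sum_eq_zero fun x hx => by rw [hz x hx, zero_mul]

lemma fbar_belief (t' : ℕ) (i : Fin N) (πi γrow : X i → ℝ)
    (hπ0 : ∀ x, 0 ≤ πi x) (hπ1 : (∑ x, πi x) = 1) (hγ : ∀ x, 0 ≤ γrow x)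
    (hK : KerStoch N X A Q1 Qk) (av : ∀ j, A j) :
    (∀ x', 0 ≤ Fbar N X A Qk t' i πi γrow av x') ∧
      (∑ x', Fbar N X A Qk t' i πi γrow av x') = 1 := by
  have hQ0 := fun x x' => ((hK.2 t' i x av).1 x')
  have hQ1 := fun x => (hK.2 t' i x av).2
  constructor
  · intro x'
    unfold Fbar
    by_cases hpos : 0 < ∑ x, πi x * γrow x
    · rw [if_pos hpos]
      exact div_nonneg (Finset.sum_nonneg fun x _ =>
        mul_nonneg (mul_nonneg (hπ0 x) (hγ x)) (hQ0 x x')) (le_of_lt hpos)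
    · rw [if_neg hpos]
      exact Finset.sum_nonneg fun x _ => mul_nonneg (hπ0 x) (hQ0 x x')
  · unfold Fbar
    by_cases hpos : 0 < ∑ x, πi x * γrow x
    · simp only [if_pos hpos]
      rw [← Finset.sum_div, Finset.sum_comm]
      have : ∀ x ∈ (univ : Finset (X i)),
          (∑ x', πi x * γrow x * Qk t' i x av x') = πi x * γrow x := by
        intro x _
        rw [← Finset.mul_sum, hQ1 x, mul_one]
      rw [Finset.sum_congr rfl this, div_self (ne_of_gt hpos)]
    · simp only [if_neg hpos]
      rw [Finset.sum_comm]
      have : ∀ x ∈ (univ : Finset (X i)),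
          (∑ x', πi x * Qk t' i x av x') = πi x := by
        intro x _
        rw [← Finset.mul_sum, hQ1 x, mul_one]
      rw [Finset.sum_congr rfl this, hπ1]

lemma μstar_isBelief (hK : KerStoch N X A Q1 Qk) (hθ : ThetaStoch N X A θ) :
    ∀ t ah, IsBelief N X (μstar N X A Q1 Qk θ t ah) := by
  intro t
  induction t with
  | zero => intro ah j; exact hK.1 j
  | succ t ih =>
    intro ah j
    have hb := ih ah
    have hθrow := hθ t _ hb
    exact fbar_belief N X A Q1 Qk t.succ j _ _ (hb j).1 (hb j).2
      (fun x => (hθrow j x).1 (ah t j)) hK (ah t)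

lemma μstar_congr : ∀ (t : ℕ) (a a' : ℕ → ∀ j, A j), (∀ s, s < t → a s = a' s) →
    μstar N X A Q1 Qk θ t a = μstar N X A Q1 Qk θ t a' := by
  intro t
  induction t with
  | zero => intro a a' _; rfl
  | succ t ih =>
    intro a a' h
    have h1 : μstar N X A Q1 Qk θ t a = μstar N X A Q1 Qk θ t a' :=
      ih a a' fun s hs => h s (Nat.lt_succ_of_lt hs)
    show Fupd N X A Qk (t + 1) _ _ _ = Fupd N X A Qk (t + 1) _ _ _
    rw [h1, h t (Nat.lt_succ_self t)]

lemma μstar_upd (t : ℕ) (ah : ℕ → ∀ j, A j) (a : ∀ j, A j) :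
    μstar N X A Q1 Qk θ t (upd ah t a) = μstar N X A Q1 Qk θ t ah := by
  apply μstar_congr
  intro s hs
  simp [upd, Nat.ne_of_lt hs]

lemma μstar_succ_upd (t : ℕ) (ah : ℕ → ∀ j, A j) (a : ∀ j, A j) :
    μstar N X A Q1 Qk θ (t + 1) (upd ah t a)
      = Fupd N X A Qk (t + 1) (μstar N X A Q1 Qk θ t ah)
          (θ t (μstar N X A Q1 Qk θ t ah)) a := by
  show Fupd N X A Qk (t + 1) (μstar N X A Q1 Qk θ t (upd ah t a))
      (θ t (μstar N X A Q1 Qk θ t (upd ah t a))) ((upd ah t a) t) = _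
  rw [μstar_upd]
  congr 1
  simp [upd]

def Nw (t : ℕ) (π : ∀ j, X j → ℝ) (j : Fin N) (b : A j) : ℝ :=
  ∑ y, π j y * θ t π j y b

lemma marg_theta (t : ℕ) (π : ∀ j, X j → ℝ) (i : Fin N) (xi : X i) (a : ∀ j, A j) :
    ∑ x : ∀ j, X j, (if x i = xi then ∏ j ∈ univ.erase i, π j (x j) else 0) *
        ∏ j ∈ univ.erase i, θ t π j (x j) (a j)
      = ∏ j ∈ univ.erase i, Nw N X A θ t π j (a j) := by
  have h1 : ∀ x : ∀ j, X j,
      (if x i = xi then ∏ j ∈ univ.erase i, π j (x j) else 0) *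
        ∏ j ∈ univ.erase i, θ t π j (x j) (a j)
      = (if x i = xi then (1:ℝ) else 0) *
          ∏ j ∈ univ.erase i, (π j (x j) * θ t π j (x j) (a j)) := by
    intro x
    rw [Finset.prod_mul_distrib]
    by_cases h : x i = xi <;> simp [h]
  calc ∑ x : ∀ j, X j, (if x i = xi then ∏ j ∈ univ.erase i, π j (x j) else 0) *
        ∏ j ∈ univ.erase i, θ t π j (x j) (a j)
      = ∑ x : ∀ j, X j, (if x i = xi then (1:ℝ) else 0) *
          ∏ j ∈ univ.erase i, (π j (x j) * θ t π j (x j) (a j)) :=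
        Finset.sum_congr rfl fun x _ => h1 x
    _ = (∑ y : X i, if y = xi then (1:ℝ) else 0) *
          ∏ j ∈ univ.erase i, ∑ y, (π j y * θ t π j y (a j)) :=
        sum_pi_split N X i (fun y => if y = xi then (1:ℝ) else 0)
          (fun j y => π j y * θ t π j y (a j))
    _ = ∏ j ∈ univ.erase i, Nw N X A θ t π j (a j) := by simp [Nw]

lemma marg_ker (t : ℕ) (π : ∀ j, X j → ℝ) (hπ0 : ∀ j y, 0 ≤ π j y)
    (hθ0 : ∀ j y b, 0 ≤ θ t π j y b)
    (i : Fin N) (xi : X i) (a : ∀ j, A j) (x' : ∀ j, X j) :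
    ∑ x : ∀ j, X j, (if x i = xi then ∏ j ∈ univ.erase i, π j (x j) else 0) *
        (∏ j ∈ univ.erase i, θ t π j (x j) (a j)) *
        ∏ j, Qk (t+1) j (x j) a (x' j)
      = Qk (t+1) i xi a (x' i) * (∏ j ∈ univ.erase i, Nw N X A θ t π j (a j)) *
        ∏ j ∈ univ.erase i, Fupd N X A Qk (t+1) π (θ t π) a j (x' j) := by
  have h1 : ∀ x : ∀ j, X j,
      (if x i = xi then ∏ j ∈ univ.erase i, π j (x j) else 0) *
        (∏ j ∈ univ.erase i, θ t π j (x j) (a j)) *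
        ∏ j, Qk (t+1) j (x j) a (x' j)
      = (if x i = xi then Qk (t+1) i (x i) a (x' i) else 0) *
          ∏ j ∈ univ.erase i,
            (π j (x j) * θ t π j (x j) (a j) * Qk (t+1) j (x j) a (x' j)) := by
    intro x
    rw [← Finset.mul_prod_erase univ (fun j => Qk (t+1) j (x j) a (x' j)) (mem_univ i)]
    simp only [Finset.prod_mul_distrib]
    by_cases h : x i = xi
    · rw [if_pos h, if_pos h]; ring
    · rw [if_neg h, if_neg h]; ring
  calc ∑ x : ∀ j, X j, (if x i = xi then ∏ j ∈ univ.erase i, π j (x j) else 0) *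
        (∏ j ∈ univ.erase i, θ t π j (x j) (a j)) *
        ∏ j, Qk (t+1) j (x j) a (x' j)
      = ∑ x : ∀ j, X j, (if x i = xi then Qk (t+1) i (x i) a (x' i) else 0) *
          ∏ j ∈ univ.erase i,
            (π j (x j) * θ t π j (x j) (a j) * Qk (t+1) j (x j) a (x' j)) :=
        Finset.sum_congr rfl fun x _ => h1 x
    _ = (∑ y : X i, if y = xi then Qk (t+1) i y a (x' i) else 0) *
          ∏ j ∈ univ.erase i,
            ∑ y, (π j y * θ t π j y (a j) * Qk (t+1) j y a (x' j)) :=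
        sum_pi_split N X i (fun y => if y = xi then Qk (t+1) i y a (x' i) else 0)
          (fun j y => π j y * θ t π j y (a j) * Qk (t+1) j y a (x' j))
    _ = Qk (t+1) i xi a (x' i) * (∏ j ∈ univ.erase i, Nw N X A θ t π j (a j)) *
        ∏ j ∈ univ.erase i, Fupd N X A Qk (t+1) π (θ t π) a j (x' j) := by
        have h2 : ∀ j ∈ univ.erase i,
            (∑ y, (π j y * θ t π j y (a j) * Qk (t+1) j y a (x' j)))
            = Nw N X A θ t π j (a j) * Fupd N X A Qk (t+1) π (θ t π) a j (x' j) :=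
          fun j _ => fbar_mul N X A Qk (t+1) j (π j) (fun y => θ t π j y (a j))
            (hπ0 j) (fun y => hθ0 j y (a j)) a (x' j)
        rw [Finset.prod_congr rfl h2, Finset.prod_mul_distrib]
        simp [Finset.sum_ite_eq', mul_assoc]

lemma alg2 {ι κ : Type*} [Fintype ι] [Fintype κ] (D Θ Rr : ι → ℝ) (K : ι → κ → ℝ)
    (C L : κ → ℝ) (p : ℝ)
    (hK1 : ∀ x, ∑ y, K x y = 1)
    (hMarg : ∀ y, ∑ x, D x * Θ x * K x y = L y) :
    ∑ x, ∑ y, D x * ((p * Θ x) * K x y * (Rr x + C y))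
      = p * ((∑ x, D x * Θ x * Rr x) + ∑ y, L y * C y) := by
  have e : ∀ x, ∑ y, D x * ((p * Θ x) * K x y * (Rr x + C y))
      = p * (D x * Θ x * Rr x) * (∑ y, K x y)
        + ∑ y, (D x * Θ x * K x y) * (p * C y) := by
    intro x
    simp only [Finset.mul_sum]
    rw [← Finset.sum_add_distrib]
    exact Finset.sum_congr rfl fun y _ => by ring
  rw [Finset.sum_congr rfl fun x _ => e x, Finset.sum_add_distrib, mul_add]
  congr 1
  · rw [Finset.mul_sum]
    exact Finset.sum_congr rfl fun x _ => by rw [hK1 x]; ring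
  · rw [Finset.sum_comm, Finset.mul_sum]
    refine Finset.sum_congr rfl fun y _ => ?_
    rw [← Finset.sum_mul, hMarg y]; ring

lemma pullM {κ : Type*} [Fintype κ] (M : ℝ) (Q C : κ → ℝ) :
    ∑ y, (M * Q y) * C y = M * ∑ y, Q y * C y := by
  rw [Finset.mul_sum]
  exact Finset.sum_congr rfl fun y _ => by ring

lemma obj_split (hK : KerStoch N X A Q1 Qk) (t : ℕ) (π : ∀ j, X j → ℝ)
    (i : Fin N) (xi : X i) (p : A i → ℝ) :
    Obj N T X A Qk R θ t π i xi p
      = ∑ a : ∀ j, A j, p (a i) *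
          ((∑ x : ∀ j, X j, (if x i = xi then ∏ j ∈ univ.erase i, π j (x j) else 0) *
              (∏ j ∈ univ.erase i, θ t π j (x j) (a j)) * R i x a)
            + (∏ j ∈ univ.erase i, Nw N X A θ t π j (a j)) *
              ∑ xi' : X i, Qk (t + 1) i xi a xi' *
                V N T X A Qk R θ (t + 1) (Fupd N X A Qk (t + 1) π (θ t π) a) i xi') := by
  unfold Obj
  rw [Finset.sum_comm]
  refine Finset.sum_congr rfl fun a _ => ?_
  have step1 : ∑ x : ∀ j, X j, ∑ xi' : X i,
      (if x i = xi then ∏ j ∈ univ.erase i, π j (x j) else 0) *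
        (p (a i) * ∏ j ∈ univ.erase i, θ t π j (x j) (a j)) *
        Qk (t + 1) i xi a xi' *
        (R i x a + V N T X A Qk R θ (t + 1) (Fupd N X A Qk (t + 1) π (θ t π) a) i xi')
      = ∑ x : ∀ j, X j, ∑ xi' : X i,
        (if x i = xi then ∏ j ∈ univ.erase i, π j (x j) else 0) *
        ((p (a i) * ∏ j ∈ univ.erase i, θ t π j (x j) (a j)) *
          Qk (t + 1) i xi a xi' *
          (R i x a + V N T X A Qk R θ (t + 1) (Fupd N X A Qk (t + 1) π (θ t π) a) i xi')) :=
    Finset.sum_congr rfl fun x _ => Finset.sum_congr rfl fun xi' _ => by ring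
  rw [step1]
  rw [alg2 (fun x => if x i = xi then ∏ j ∈ univ.erase i, π j (x j) else 0)
        (fun x => ∏ j ∈ univ.erase i, θ t π j (x j) (a j))
        (fun x => R i x a)
        (fun _ xi' => Qk (t + 1) i xi a xi')
        (fun xi' => V N T X A Qk R θ (t + 1) (Fupd N X A Qk (t + 1) π (θ t π) a) i xi')
        (fun xi' => (∏ j ∈ univ.erase i, Nw N X A θ t π j (a j)) * Qk (t + 1) i xi a xi')
        (p (a i))
        (fun _ => (hK.2 (t + 1) i xi a).2)
        (fun xi' => by
          rw [← Finset.sum_mul, marg_theta N X A θ t π i xi a])]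
  rw [pullM]

lemma collapse (i : Fin N) (βi : ℕ → (ℕ → ∀ j, A j) → (ℕ → X i) → A i → ℝ)
    (t : ℕ) (ah : ℕ → ∀ j, A j) (xh : ℕ → X i) (a : ∀ j, A j)
    (μ' : ∀ j, X j → ℝ) (c : ℝ) :
    ∑ x' : ∀ j, X j,
        Qk (t+1) i (xh t) a (x' i) * c * (∏ j ∈ univ.erase i, μ' j (x' j)) *
          cont N T X A Q1 Qk R θ i βi (t+1) (upd ah t a) (upd xh (t+1) (x' i)) x'
      = c * ∑ xi' : X i, Qk (t+1) i (xh t) a xi' *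
          contVal N T X A Q1 Qk R θ i βi (t+1) (upd ah t a) (upd xh (t+1) xi') μ' := by
  unfold contVal
  have hupd : ∀ xi' : X i, (upd xh (t+1) xi') (t+1) = xi' := fun xi' => by simp [upd]
  simp only [Finset.mul_sum]
  rw [Finset.sum_comm]
  refine Finset.sum_congr rfl fun x' _ => ?_
  rw [Finset.sum_eq_single (x' i)
    (fun xi' _ hne => by
      rw [hupd xi']
      rw [if_neg (fun hc : x' i = xi' => hne hc.symm)]
      ring)
    (fun h => absurd (mem_univ (x' i)) h)]
  rw [hupd (x' i), if_pos rfl]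
  ring

lemma objV (t : ℕ) (ht : t < T) (π : ∀ j, X j → ℝ) (i : Fin N) (xi : X i) :
    V N T X A Qk R θ t π i xi = Obj N T X A Qk R θ t π i xi (θ t π i xi) := by
  rw [V, dif_pos ht]
  unfold Obj
  refine Finset.sum_congr rfl fun x _ => Finset.sum_congr rfl fun a _ =>
    Finset.sum_congr rfl fun xi' _ => ?_
  by_cases h : x i = xi
  · rw [if_pos h, ← Finset.mul_prod_erase univ (fun j => θ t π j (x j) (a j))
      (mem_univ i), h]
  · rw [if_neg h]
    ring

lemma contVal_split (hK : KerStoch N X A Q1 Qk) (hθ : ThetaStoch N X A θ)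
    (i : Fin N) (βi : ℕ → (ℕ → ∀ j, A j) → (ℕ → X i) → A i → ℝ)
    (t : ℕ) (ht : t < T) (ah : ℕ → ∀ j, A j) (xh : ℕ → X i) :
    contVal N T X A Q1 Qk R θ i βi t ah xh (μstar N X A Q1 Qk θ t ah)
      = ∑ a : ∀ j, A j, βi t ah xh (a i) *
          ((∑ x : ∀ j, X j,
              (if x i = xh t then ∏ j ∈ univ.erase i, (μstar N X A Q1 Qk θ t ah) j (x j) else 0) *
              (∏ j ∈ univ.erase i, θ t (μstar N X A Q1 Qk θ t ah) j (x j) (a j)) * R i x a)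
            + (∏ j ∈ univ.erase i, Nw N X A θ t (μstar N X A Q1 Qk θ t ah) j (a j)) *
              ∑ xi' : X i, Qk (t + 1) i (xh t) a xi' *
                contVal N T X A Q1 Qk R θ i βi (t + 1) (upd ah t a) (upd xh (t + 1) xi')
                  (Fupd N X A Qk (t + 1) (μstar N X A Q1 Qk θ t ah)
                    (θ t (μstar N X A Q1 Qk θ t ah)) a)) := by
  have hbel := μstar_isBelief N X A Q1 Qk θ hK hθ t ah
  set π := μstar N X A Q1 Qk θ t ah with hπ
  have hπ0 : ∀ j y, 0 ≤ π j y := fun j y => (hbel j).1 y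
  have hθ0 : ∀ j y b, 0 ≤ θ t π j y b := fun j y b => (hθ t π hbel j y).1 b
  have hc : ∀ xcur : ∀ j, X j, cont N T X A Q1 Qk R θ i βi t ah xh xcur
      = ∑ a : ∀ j, A j, ∑ x' : ∀ j, X j,
          (βi t ah xh (a i) * ∏ j ∈ univ.erase i, θ t π j (xcur j) (a j)) *
          (∏ j, Qk (t + 1) j (xcur j) a (x' j)) *
          (R i xcur a +
            cont N T X A Q1 Qk R θ i βi (t + 1) (upd ah t a) (upd xh (t + 1) (x' i)) x') := by
    intro xcur; rw [cont, dif_pos ht]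
  calc contVal N T X A Q1 Qk R θ i βi t ah xh π
      = ∑ xcur : ∀ j, X j, ∑ a : ∀ j, A j, ∑ x' : ∀ j, X j,
          (if xcur i = xh t then ∏ j ∈ univ.erase i, π j (xcur j) else 0) *
          ((βi t ah xh (a i) * ∏ j ∈ univ.erase i, θ t π j (xcur j) (a j)) *
            (∏ j, Qk (t + 1) j (xcur j) a (x' j)) *
            (R i xcur a +
              cont N T X A Q1 Qk R θ i βi (t + 1) (upd ah t a) (upd xh (t + 1) (x' i)) x')) := by
        unfold contVal
        refine Finset.sum_congr rfl fun xcur _ => ?_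
        rw [hc xcur, Finset.mul_sum]
        exact Finset.sum_congr rfl fun a _ => Finset.mul_sum _ _ _
    _ = ∑ a : ∀ j, A j, ∑ xcur : ∀ j, X j, ∑ x' : ∀ j, X j,
          (if xcur i = xh t then ∏ j ∈ univ.erase i, π j (xcur j) else 0) *
          ((βi t ah xh (a i) * ∏ j ∈ univ.erase i, θ t π j (xcur j) (a j)) *
            (∏ j, Qk (t + 1) j (xcur j) a (x' j)) *
            (R i xcur a +
              cont N T X A Q1 Qk R θ i βi (t + 1) (upd ah t a) (upd xh (t + 1) (x' i)) x')) :=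
      Finset.sum_comm
    _ = _ := by
        refine Finset.sum_congr rfl fun a _ => ?_
        rw [alg2 (fun xcur => if xcur i = xh t then ∏ j ∈ univ.erase i, π j (xcur j) else 0)
              (fun xcur => ∏ j ∈ univ.erase i, θ t π j (xcur j) (a j))
              (fun xcur => R i xcur a)
              (fun xcur x' => ∏ j, Qk (t + 1) j (xcur j) a (x' j))
              (fun x' =>
                cont N T X A Q1 Qk R θ i βi (t + 1) (upd ah t a) (upd xh (t + 1) (x' i)) x')
              (fun x' => Qk (t + 1) i (xh t) a (x' i) *
                (∏ j ∈ univ.erase i, Nw N X A θ t π j (a j)) *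
                ∏ j ∈ univ.erase i, Fupd N X A Qk (t + 1) π (θ t π) a j (x' j))
              (βi t ah xh (a i))
              (fun xcur => by
                rw [sum_prod_pi]
                exact Finset.prod_eq_one fun j _ => (hK.2 (t + 1) j (xcur j) a).2)
              (fun x' => marg_ker N X A Qk θ t π hπ0 hθ0 i (xh t) a x')]
        congr 1
        congr 1
        exact collapse N T X A Q1 Qk R θ i βi t ah xh a
          (Fupd N X A Qk (t + 1) π (θ t π) a)
          (∏ j ∈ univ.erase i, Nw N X A θ t π j (a j))

lemma Nw_nonneg (hθ : ThetaStoch N X A θ) (t : ℕ) (π : ∀ j, X j → ℝ)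
    (hbel : IsBelief N X π) (j : Fin N) (b : A j) : 0 ≤ Nw N X A θ t π j b :=
  Finset.sum_nonneg fun y _ => mul_nonneg ((hbel j).1 y) ((hθ t π hbel j y).1 b)

lemma master (hK : KerStoch N X A Q1 Qk) (hθ : ThetaStoch N X A θ)
    (hFP : FixedPoint N T X A Qk R θ) (i : Fin N) :
    ∀ (k t : ℕ), t + k = T → ∀ (ah : ℕ → ∀ j, A j) (xh : ℕ → X i),
      (contVal N T X A Q1 Qk R θ i (βeq N X A Q1 Qk θ i) t ah xh (μstar N X A Q1 Qk θ t ah)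
        = V N T X A Qk R θ t (μstar N X A Q1 Qk θ t ah) i (xh t)) ∧
      (∀ βi : ℕ → (ℕ → ∀ j, A j) → (ℕ → X i) → A i → ℝ,
        (∀ n a' x', (∀ b, 0 ≤ βi n a' x' b) ∧ (∑ b, βi n a' x' b) = 1) →
        contVal N T X A Q1 Qk R θ i βi t ah xh (μstar N X A Q1 Qk θ t ah)
          ≤ contVal N T X A Q1 Qk R θ i (βeq N X A Q1 Qk θ i) t ah xh
              (μstar N X A Q1 Qk θ t ah)) := by
  intro k
  induction k with
  | zero =>
    intro t htT ah xh
    have hnt : ¬ t < T := by omega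
    have hcv : ∀ β : ℕ → (ℕ → ∀ j, A j) → (ℕ → X i) → A i → ℝ,
        contVal N T X A Q1 Qk R θ i β t ah xh (μstar N X A Q1 Qk θ t ah) = 0 := by
      intro β
      unfold contVal
      exact Finset.sum_eq_zero fun xcur _ => by rw [cont, dif_neg hnt, mul_zero]
    refine ⟨?_, fun βi _ => by rw [hcv, hcv]⟩
    rw [hcv, V, dif_neg hnt]
  | succ k ih =>
    intro t htT ah xh
    have ht : t < T := by omega
    have hbel := μstar_isBelief N X A Q1 Qk θ hK hθ t ah
    have hμ : ∀ a : ∀ j, A j, μstar N X A Q1 Qk θ (t + 1) (upd ah t a)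
        = Fupd N X A Qk (t + 1) (μstar N X A Q1 Qk θ t ah)
            (θ t (μstar N X A Q1 Qk θ t ah)) a :=
      fun a => μstar_succ_upd N X A Q1 Qk θ t ah a
    have hupd : ∀ xi' : X i, (upd xh (t + 1) xi') (t + 1) = xi' := fun xi' => by simp [upd]
    -- the inner equalities/inequalities from the induction hypothesis
    have innerEq : ∀ (a : ∀ j, A j) (xi' : X i),
        contVal N T X A Q1 Qk R θ i (βeq N X A Q1 Qk θ i) (t + 1) (upd ah t a)
            (upd xh (t + 1) xi')
            (Fupd N X A Qk (t + 1) (μstar N X A Q1 Qk θ t ah)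
              (θ t (μstar N X A Q1 Qk θ t ah)) a)
          = V N T X A Qk R θ (t + 1)
              (Fupd N X A Qk (t + 1) (μstar N X A Q1 Qk θ t ah)
                (θ t (μstar N X A Q1 Qk θ t ah)) a) i xi' := by
      intro a xi'
      have h1 := (ih (t + 1) (by omega) (upd ah t a) (upd xh (t + 1) xi')).1
      rw [hμ a, hupd xi'] at h1
      exact h1
    have hEq : contVal N T X A Q1 Qk R θ i (βeq N X A Q1 Qk θ i) t ah xh
        (μstar N X A Q1 Qk θ t ah)
        = V N T X A Qk R θ t (μstar N X A Q1 Qk θ t ah) i (xh t) := by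
      rw [contVal_split N T X A Q1 Qk R θ hK hθ i (βeq N X A Q1 Qk θ i) t ht ah xh,
        objV N T X A Qk R θ t ht (μstar N X A Q1 Qk θ t ah) i (xh t),
        obj_split N T X A Q1 Qk R θ hK t (μstar N X A Q1 Qk θ t ah) i (xh t)
          (θ t (μstar N X A Q1 Qk θ t ah) i (xh t))]
      refine Finset.sum_congr rfl fun a _ => ?_
      have hrow : βeq N X A Q1 Qk θ i t ah xh (a i)
          = θ t (μstar N X A Q1 Qk θ t ah) i (xh t) (a i) := rfl
      rw [hrow]
      congr 1
      congr 1
      exact congrArg _ (Finset.sum_congr rfl fun xi' _ => by rw [innerEq a xi'])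
    refine ⟨hEq, fun βi hβ => ?_⟩
    calc contVal N T X A Q1 Qk R θ i βi t ah xh (μstar N X A Q1 Qk θ t ah)
        ≤ Obj N T X A Qk R θ t (μstar N X A Q1 Qk θ t ah) i (xh t) (βi t ah xh) := by
          rw [contVal_split N T X A Q1 Qk R θ hK hθ i βi t ht ah xh,
            obj_split N T X A Q1 Qk R θ hK t (μstar N X A Q1 Qk θ t ah) i (xh t) (βi t ah xh)]
          refine Finset.sum_le_sum fun a _ => ?_
          refine mul_le_mul_of_nonneg_left ?_ ((hβ t ah xh).1 (a i))
          refine add_le_add le_rfl ?_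
          refine mul_le_mul_of_nonneg_left ?_
            (Finset.prod_nonneg fun j _ => Nw_nonneg N X A θ hθ t _ hbel j (a j))
          refine Finset.sum_le_sum fun xi' _ => ?_
          refine mul_le_mul_of_nonneg_left ?_ ((hK.2 (t + 1) i (xh t) a).1 xi')
          have h2 := ih (t + 1) (by omega) (upd ah t a) (upd xh (t + 1) xi')
          have hle := h2.2 βi hβ
          rw [hμ a] at hle
          exact hle.trans (le_of_eq (innerEq a xi'))
      _ ≤ Obj N T X A Qk R θ t (μstar N X A Q1 Qk θ t ah) i (xh t)
            (θ t (μstar N X A Q1 Qk θ t ah) i (xh t)) :=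
          hFP t ht (μstar N X A Q1 Qk θ t ah) hbel i (xh t) (βi t ah xh)
            (hβ t ah xh).1 (hβ t ah xh).2
      _ = V N T X A Qk R θ t (μstar N X A Q1 Qk θ t ah) i (xh t) :=
          (objV N T X A Qk R θ t ht (μstar N X A Q1 Qk θ t ah) i (xh t)).symm
      _ = contVal N T X A Q1 Qk R θ i (βeq N X A Q1 Qk θ i) t ah xh
            (μstar N X A Q1 Qk θ t ah) := hEq.symm


/-- the backward-forward construction yields a PBE: if the equilibrium
generating function `θ` solves the backward fixed-point equations, then the strategy
profile `β*` and beliefs `μ*` defined by the forward recursion form a perfect Bayesian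
equilibrium: at every period `t`, public history and private history, no player can
improve its expected continuation reward by any unilateral deviation. -/
theorem backward_forward_gives_PBE
    (hK : KerStoch N X A Q1 Qk)
    (hθ : ThetaStoch N X A θ)
    (hFP : FixedPoint N T X A Qk R θ) :
    ∀ (i : Fin N) (t : ℕ), t ≤ T →
    ∀ (ah : ℕ → ∀ j, A j) (xh : ℕ → X i)
      (βi : ℕ → (ℕ → ∀ j, A j) → (ℕ → X i) → A i → ℝ),
      (∀ n a' x', (∀ b, 0 ≤ βi n a' x' b) ∧ (∑ b, βi n a' x' b) = 1) →
      contVal N T X A Q1 Qk R θ i βi t ah xh (μstar N X A Q1 Qk θ t ah)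
        ≤ contVal N T X A Q1 Qk R θ i (βeq N X A Q1 Qk θ i) t ah xh
            (μstar N X A Q1 Qk θ t ah) := by
  intro i t hT ah xh βi hβ
  exact (master N T X A Q1 Qk R θ hK hθ hFP i (T - t) t (by omega) ah xh).2 βi hβ

end SPBE
end
end
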